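/- arXiv:0808.2944 — 5 statements merged into one kernel-verified Lean document; each statement's English description precedes it below -/
import Mathlib

section
/- Let G be a countable group, π a unitary representation of G on a complex Hilbert space H, and N ∈ ℕ. Assume ξ₁ is a Parseval frame vector for H, and ξ₂,…,ξ_{N+1} ∈ H are such that each ξᵢ is a Parseval frame vector for Mᵢ := closure(span{π(g)ξᵢ : g ∈ G}) (with pᵢ' the orthogonal projection of H onto Mᵢ), the vectors ξ₁,…,ξ_{N+1} are mutually strongly disjoint, and there is no nonzero Bessel vector strongly disjoint from all ξᵢ. Let η = u₁'ξ₁ + ⋯ + u_{N+1}'ξ_{N+1} and ζ = v₁'ξ₁ + ⋯ + v_{N+1}'ξ_{N+1} be Parseval frame vectors for H, with uᵢ', vᵢ' ∈ π(G)', uᵢ'pᵢ' = uᵢ', vᵢ'pᵢ' = vᵢ', ∑ᵢ uᵢ'(uᵢ')* = id_H and ∑ᵢ vᵢ'(vᵢ')* = id_H. Then: (a) η and ζ are strongly disjoint if and only if v₁'(u₁')* + ⋯ + v_{N+1}'(u_{N+1}')* = 0; (b) η and ζ are unitarily equivalent if and only if (uᵢ')*uⱼ' = (vᵢ')*vⱼ'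 for all i, j. -/
noncomputable section

open scoped ComplexConjugate

local notation "⟪" x ", " y "⟫" => @inner ℂ _ _ x y

/-- A group is ICC if every nontrivial conjugacy class is infinite. -/
def IsICC (G : Type*) [Group G] : Prop :=
  ∀ g : G, g ≠ 1 → {x : G | ∃ h : G, x = h * g * h⁻¹}.Infinite

variable {G : Type*} [Group G]
variable {H : Type*} [NormedAddCommGroup H] [InnerProductSpace ℂ H]

/-- `ξ` is a Parseval frame vector for the whole space `H`. -/
def IsParsevalFrameVector (π : G →* (H ≃ₗᵢ[ℂ] H)) (ξ : H) : Prop :=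
  ∀ f : H, ∑' g : G, ‖⟪f, π g ξ⟫‖ ^ 2 = ‖f‖ ^ 2

/-- `ξ` is a Parseval frame vector for the (closed) subspace `M` of `H`. -/
def IsParsevalFrameVectorIn (π : G →* (H ≃ₗᵢ[ℂ] H)) (ξ : H) (M : Submodule ℂ H) : Prop :=
  (∀ g : G, π g ξ ∈ M) ∧ ∀ f ∈ M, ∑' g : G, ‖⟪f, π g ξ⟫‖ ^ 2 = ‖f‖ ^ 2

/-- The closed linear span of the orbit `{π(g)ξ : g ∈ G}`. -/
def orbitSpan (π : G →* (H ≃ₗᵢ[ℂ] H)) (ξ : H) : Submodule ℂ H :=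
  (Submodule.span ℂ (Set.range fun g : G => π g ξ)).topologicalClosure

/-- `ξ₁, …, ξ_k` (with `ξ i` a Parseval frame vector for `M i`) form a strongly disjoint
`k`-tuple: `{π(g)ξ₁ ⊕ ⋯ ⊕ π(g)ξ_k : g ∈ G}` is a Parseval frame for `M₁ ⊕ ⋯ ⊕ M_k`. -/
def StronglyDisjointTuple {k : ℕ} (π : G →* (H ≃ₗᵢ[ℂ] H)) (ξ : Fin k → H)
    (M : Fin k → Submodule ℂ H) : Prop :=
  ∀ f : Fin k → H, (∀ i, f i ∈ M i) →
    ∑' g : G, ‖∑ i, ⟪f i, π g (ξ i)⟫‖ ^ 2 = ∑ i, ‖f i‖ ^ 2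

/-- `T` belongs to the commutant `π(G)'`. -/
def InCommutant (π : G →* (H ≃ₗᵢ[ℂ] H)) (T : H →L[ℂ] H) : Prop :=
  ∀ (g : G) (x : H), T (π g x) = π g (T x)

/-- The closed subspace `closure {T ξ : T ∈ π(G)'}`. -/
def commOrbit (π : G →* (H ≃ₗᵢ[ℂ] H)) (ξ : H) : Submodule ℂ H :=
  (Submodule.span ℂ {x : H | ∃ T : H →L[ℂ] H, InCommutant π T ∧ x = T ξ}).topologicalClosure

/-- `p` is the orthogonal projection of `H` onto the subspace `M`. -/
def IsOrthoProjOnto (M : Submodule ℂ H) (p : H →L[ℂ] H) : Prop :=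
  ∀ x : H, p x ∈ M ∧ x - p x ∈ Mᗮ

/-- `ζ` is a Bessel vector for the representation `π`. -/
def IsBesselVector (π : G →* (H ≃ₗᵢ[ℂ] H)) (ζ : H) : Prop :=
  ∃ B : ℝ, 0 < B ∧ ∀ f : H, ∀ s : Finset G, ∑ g ∈ s, ‖⟪f, π g ζ⟫‖ ^ 2 ≤ B * ‖f‖ ^ 2

/-- Strong disjointness of a Parseval frame vector `ξ` (for the subspace `M` of `H`, under `π`)
and `ζ` (for the subspace `M₂` of `H₂`, under `σ`), expressed by the vanishing of the mixed
sums `∑_g ⟨v, π(g)ξ⟩ conj ⟨w, σ(g)ζ⟩`. -/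
def StronglyDisjointPairIn (π : G →* (H ≃ₗᵢ[ℂ] H)) {H₂ : Type*} [NormedAddCommGroup H₂]
    [InnerProductSpace ℂ H₂] (σ : G →* (H₂ ≃ₗᵢ[ℂ] H₂)) (ξ : H) (ζ : H₂)
    (M : Submodule ℂ H) (M₂ : Submodule ℂ H₂) : Prop :=
  ∀ v ∈ M, ∀ w ∈ M₂, ∑' g : G, ⟪v, π g ξ⟫ * (starRingEnd ℂ) ⟪w, σ g ζ⟫ = 0

/-- A Riesz sequence: two-sided ℓ²-bounds on finite linear combinations. -/
def IsRieszSequence {J : Type*} (f : J → H) : Prop :=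
  ∃ A B : ℝ, 0 < A ∧ 0 < B ∧ ∀ c : J →₀ ℂ,
    A * ∑ j ∈ c.support, ‖c j‖ ^ 2 ≤ ‖∑ j ∈ c.support, c j • f j‖ ^ 2 ∧
    ‖∑ j ∈ c.support, c j • f j‖ ^ 2 ≤ B * ∑ j ∈ c.support, ‖c j‖ ^ 2

lemma aux_pi_inv (π : G →* (H ≃ₗᵢ[ℂ] H)) (g : G) (x : H) : π g (π g⁻¹ x) = x := by
  have h : (π g) * (π g⁻¹) = 1 := by rw [← map_mul, mul_inv_cancel, map_one]
  calc π g (π g⁻¹ x) = ((π g) * (π g⁻¹)) x := rfl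
    _ = x := by rw [h]; rfl

lemma aux_inner_pi (π : G →* (H ≃ₗᵢ[ℂ] H)) (g : G) (x y : H) :
    ⟪x, π g y⟫ = ⟪π g⁻¹ x, y⟫ := by
  conv_lhs => rw [← aux_pi_inv π g x]
  exact LinearIsometryEquiv.inner_map_map (π g) _ _

lemma parseval_summable {π : G →* (H ≃ₗᵢ[ℂ] H)} {ξ : H} {M : Submodule ℂ H}
    (hP : IsParsevalFrameVectorIn π ξ M) {f : H} (hf : f ∈ M) :
    Summable fun g : G => ‖⟪f, π g ξ⟫‖ ^ 2 := by
  by_contra h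
  have h0 : ∑' g : G, ‖⟪f, π g ξ⟫‖ ^ 2 = 0 := tsum_eq_zero_of_not_summable h
  have h1 := hP.2 f hf
  rw [h0] at h1
  have hf0 : f = 0 := by
    have : ‖f‖ = 0 := by nlinarith [norm_nonneg f]
    simpa using this
  refine h ?_
  simp only [hf0, inner_zero_left, norm_zero]
  simpa using summable_zero

lemma aux_rc_ofReal (r : ℝ) : (RCLike.ofReal r : ℂ) = Complex.ofReal r := rfl

lemma parseval_polar {π : G →* (H ≃ₗᵢ[ℂ] H)} {ξ : H} {M : Submodule ℂ H}
    (hP : IsParsevalFrameVectorIn π ξ M) {x y : H} (hx : x ∈ M) (hy : y ∈ M) :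
    HasSum (fun g : G => ⟪x, π g ξ⟫ * (starRingEnd ℂ) ⟪y, π g ξ⟫) ⟪x, y⟫ := by
  have hs : ∀ z, z ∈ M → HasSum (fun g : G => ((‖⟪z, π g ξ⟫‖ ^ 2 : ℝ) : ℂ))
      ((‖z‖ ^ 2 : ℝ) : ℂ) := by
    intro z hz
    have h0 : HasSum (fun g : G => ‖⟪z, π g ξ⟫‖ ^ 2) (‖z‖ ^ 2) := by
      rw [← hP.2 z hz]
      exact (parseval_summable hP hz).hasSum
    simpa using h0.mapL Complex.ofRealCLM
  have h1 := hs (y + x) (M.add_mem hy hx)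
  have h2 := hs (y - x) (M.sub_mem hy hx)
  have h3 := hs (Complex.I • x + y) (M.add_mem (M.smul_mem _ hx) hy)
  have h4 := hs ((-Complex.I) • x + y) (M.add_mem (M.smul_mem _ hx) hy)
  have hcomb := ((h1.sub h2).add ((h3.sub h4).mul_right Complex.I)).div_const 4
  convert hcomb using 2 with g
  case e'_3 => rfl
  · -- pointwise identity
    have hpol := inner_eq_sum_norm_sq_div_four (𝕜 := ℂ) ⟪y, π g ξ⟫ ⟪x, π g ξ⟫
    simp only [RCLike.inner_apply, RCLike.I_to_complex, smul_eq_mul, aux_rc_ofReal] at hpol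
    have e1 : ⟪y + x, π g ξ⟫ = ⟪y, π g ξ⟫ + ⟪x, π g ξ⟫ := inner_add_left _ _ _
    have e2 : ⟪y - x, π g ξ⟫ = ⟪y, π g ξ⟫ - ⟪x, π g ξ⟫ := inner_sub_left _ _ _
    have e3 : ⟪Complex.I • x + y, π g ξ⟫ = ⟪y, π g ξ⟫ - Complex.I * ⟪x, π g ξ⟫ := by
      rw [inner_add_left, inner_smul_left]; simp [Complex.conj_I]; ring
    have e4 : ⟪(-Complex.I) • x + y, π g ξ⟫ = ⟪y, π g ξ⟫ + Complex.I * ⟪x, π g ξ⟫ := by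
      rw [inner_add_left, inner_smul_left]; simp [Complex.conj_I]; ring
    rw [e1, e2, e3, e4]
    rw [mul_comm] at hpol
    push_cast at hpol ⊢
    linear_combination hpol
  · -- value identity
    have hpol := inner_eq_sum_norm_sq_div_four (𝕜 := ℂ) x y
    simp only [RCLike.I_to_complex, aux_rc_ofReal] at hpol
    have e1 : ‖y + x‖ = ‖x + y‖ := by rw [add_comm]
    have e2 : ‖y - x‖ = ‖x - y‖ := norm_sub_rev _ _
    have e3 : ‖Complex.I • x + y‖ = ‖x - Complex.I • y‖ := by
      have : Complex.I • (x - Complex.I • y) = Complex.I • x + y := by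
        rw [smul_sub, smul_smul, Complex.I_mul_I]; simp
      rw [← this, norm_smul]; simp
    have e4 : ‖(-Complex.I) • x + y‖ = ‖x + Complex.I • y‖ := by
      have : (-Complex.I) • (x + Complex.I • y) = (-Complex.I) • x + y := by
        rw [smul_add, smul_smul]; simp [Complex.I_mul_I]
      rw [← this, norm_smul]; simp
    rw [e1, e2, e3, e4, hpol]
    push_cast
    ring




lemma aux_orth_unique {M : Submodule ℂ H} {m m' x : H} (hm : m ∈ M) (hm' : m' ∈ M)
    (h1 : x - m ∈ Mᗮ) (h2 : x - m' ∈ Mᗮ) : m = m' := by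
  have hd : m - m' ∈ M := M.sub_mem hm hm'
  have hd' : m - m' ∈ Mᗮ := by
    have h3 := Mᗮ.sub_mem h2 h1
    simpa using h3
  have h4 : ⟪m - m', m - m'⟫ = 0 :=
    Submodule.inner_right_of_mem_orthogonal hd hd'
  exact sub_eq_zero.mp (inner_self_eq_zero.mp h4)

lemma aux_orbitSpan_inv (π : G →* (H ≃ₗᵢ[ℂ] H)) (ξ : H) (g : G) {x : H}
    (hx : x ∈ orbitSpan π ξ) : π g x ∈ orbitSpan π ξ := by
  set S : Set H := Set.range fun h : G => π h ξ with hS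
  have hmap : Set.MapsTo (π g) ↑(Submodule.span ℂ S) ↑(Submodule.span ℂ S) := by
    intro y hy
    have h1 : Submodule.map ((π g).toLinearEquiv.toLinearMap) (Submodule.span ℂ S)
        ≤ Submodule.span ℂ S := by
      rw [Submodule.map_span]
      apply Submodule.span_mono
      rintro _ ⟨_, ⟨h, rfl⟩, rfl⟩
      exact ⟨g * h, by simp [map_mul]⟩
    exact h1 ⟨y, hy, rfl⟩
  have hx' : x ∈ closure (↑(Submodule.span ℂ S) : Set H) := by
    rwa [← Submodule.topologicalClosure_coe]
  have := hmap.closure (π g).continuous hx'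
  rwa [← Submodule.topologicalClosure_coe] at this

lemma aux_orbitSpan_perp_inv (π : G →* (H ≃ₗᵢ[ℂ] H)) (ξ : H) (g : G) {x : H}
    (hx : x ∈ (orbitSpan π ξ)ᗮ) : π g x ∈ (orbitSpan π ξ)ᗮ := by
  rw [Submodule.mem_orthogonal]
  intro w hw
  rw [aux_inner_pi]
  exact Submodule.inner_right_of_mem_orthogonal (aux_orbitSpan_inv π ξ g⁻¹ hw) hx

lemma aux_self_mem_orbitSpan (π : G →* (H ≃ₗᵢ[ℂ] H)) (ξ : H) : ξ ∈ orbitSpan π ξ := by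
  have h : π 1 ξ ∈ orbitSpan π ξ :=
    Submodule.le_topologicalClosure _ (Submodule.subset_span ⟨1, rfl⟩)
  simpa using h

lemma aux_proj_inner {M : Submodule ℂ H} {p : H →L[ℂ] H} (hp : IsOrthoProjOnto M p)
    (x y : H) : ⟪p x, y⟫ = ⟪x, p y⟫ := by
  have h1 : ⟪p x, y - p y⟫ = 0 :=
    Submodule.inner_right_of_mem_orthogonal (hp x).1 (hp y).2
  have h2 : ⟪x - p x, p y⟫ = 0 := by
    rw [← inner_conj_symm]
    rw [Submodule.inner_right_of_mem_orthogonal (hp y).1 (hp x).2]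
    simp
  have e1 : ⟪p x, y⟫ = ⟪p x, p y⟫ := by
    have := inner_sub_right (𝕜 := ℂ) (p x) y (p y)
    rw [h1] at this
    linear_combination -this
  have e2 : ⟪x, p y⟫ = ⟪p x, p y⟫ := by
    have := inner_sub_left (𝕜 := ℂ) x (p x) (p y)
    rw [h2] at this
    linear_combination -this
  rw [e1, e2]

lemma aux_proj_fix {M : Submodule ℂ H} {p : H →L[ℂ] H} (hp : IsOrthoProjOnto M p)
    {x : H} (hx : x ∈ M) : p x = x :=
  aux_orth_unique (hp x).1 hx (hp x).2 (by simp)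

lemma aux_proj_commutant (π : G →* (H ≃ₗᵢ[ℂ] H)) (ξ : H) {p : H →L[ℂ] H}
    (hp : IsOrthoProjOnto (orbitSpan π ξ) p) : InCommutant π p := by
  intro g x
  refine aux_orth_unique (M := orbitSpan π ξ) (x := π g x) (hp (π g x)).1
    (aux_orbitSpan_inv π ξ g (hp x).1) (hp (π g x)).2 ?_
  have h : π g x - π g (p x) = π g (x - p x) := by rw [map_sub]
  rw [h]
  exact aux_orbitSpan_perp_inv π ξ g (hp x).2

section Complete

variable [CompleteSpace H]

open ContinuousLinearMap

lemma aux_adjoint_commutant {π : G →* (H ≃ₗᵢ[ℂ] H)} {a : H →L[ℂ] H}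
    (ha : InCommutant π a) : InCommutant π (adjoint a) := by
  intro g x
  apply ext_inner_left ℂ
  intro w
  rw [adjoint_inner_right, aux_inner_pi π g (a w) x, ← ha g⁻¹ w,
    ← adjoint_inner_right, ← aux_inner_pi π g w (adjoint a x)]

lemma aux_proj_adjoint {M : Submodule ℂ H} {p : H →L[ℂ] H} (hp : IsOrthoProjOnto M p) :
    adjoint p = p := by
  ext x
  apply ext_inner_left ℂ
  intro w
  rw [adjoint_inner_right, aux_proj_inner hp]

lemma aux_adjoint_mem {M : Submodule ℂ H} {p a : H →L[ℂ] H} (hp : IsOrthoProjOnto M p)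
    (hap : a ∘L p = a) (f : H) : adjoint a f ∈ M := by
  have h : p (adjoint a f) = adjoint a f := by
    apply ext_inner_left ℂ
    intro w
    rw [← aux_proj_inner hp, adjoint_inner_right, adjoint_inner_right]
    have : a (p w) = (a ∘L p) w := rfl
    rw [this, hap]
  rw [← h]
  exact (hp _).1

lemma core_tsum {k : ℕ} (π : G →* (H ≃ₗᵢ[ℂ] H)) (ξ : Fin k → H)
    (hξ : ∀ i, IsParsevalFrameVectorIn π (ξ i) (orbitSpan π (ξ i)))
    (hdisj : ∀ i j, i ≠ j → ∀ x ∈ orbitSpan π (ξ i), ∀ y ∈ orbitSpan π (ξ j),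
      ∑' g : G, ⟪x, π g (ξ i)⟫ * (starRingEnd ℂ) ⟪y, π g (ξ j)⟫ = 0)
    (p : Fin k → (H →L[ℂ] H)) (hp : ∀ i, IsOrthoProjOnto (orbitSpan π (ξ i)) (p i))
    (a b : Fin k → (H →L[ℂ] H)) (ha : ∀ i, InCommutant π (a i)) (hb : ∀ i, InCommutant π (b i))
    (hap : ∀ i, (a i) ∘L (p i) = a i) (hbp : ∀ i, (b i) ∘L (p i) = b i)
    (f f' : H) :
    ∑' g : G, ⟪f, π g (∑ i, a i (ξ i))⟫ * (starRingEnd ℂ) ⟪f', π g (∑ i, b i (ξ i))⟫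
      = ⟪f, (∑ i, (a i) ∘L (adjoint (b i))) f'⟫ := by
  set x : Fin k → H := fun i => adjoint (a i) f with hxdef
  set y : Fin k → H := fun i => adjoint (b i) f' with hydef
  have hx : ∀ i, x i ∈ orbitSpan π (ξ i) := fun i => aux_adjoint_mem (hp i) (hap i) f
  have hy : ∀ i, y i ∈ orbitSpan π (ξ i) := fun i => aux_adjoint_mem (hp i) (hbp i) f'
  have hLf : ∀ g : G, ⟪f, π g (∑ i, a i (ξ i))⟫ = ∑ i, ⟪x i, π g (ξ i)⟫ := by
    intro g
    rw [map_sum, inner_sum]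
    refine Finset.sum_congr rfl fun i _ => ?_
    rw [← ha i g (ξ i), ← adjoint_inner_left]
  have hLf' : ∀ g : G, ⟪f', π g (∑ i, b i (ξ i))⟫ = ∑ i, ⟪y i, π g (ξ i)⟫ := by
    intro g
    rw [map_sum, inner_sum]
    refine Finset.sum_congr rfl fun i _ => ?_
    rw [← hb i g (ξ i), ← adjoint_inner_left]
  have hsq : ∀ i, Summable fun g : G => ‖⟪x i, π g (ξ i)⟫‖ ^ 2 :=
    fun i => parseval_summable (hξ i) (hx i)
  have hsq' : ∀ i, Summable fun g : G => ‖⟪y i, π g (ξ i)⟫‖ ^ 2 :=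
    fun i => parseval_summable (hξ i) (hy i)
  have hprod : ∀ i j, Summable fun g : G =>
      ⟪x i, π g (ξ i)⟫ * (starRingEnd ℂ) ⟪y j, π g (ξ j)⟫ := by
    intro i j
    apply Summable.of_norm
    have hbound : Summable fun g : G =>
        (‖⟪x i, π g (ξ i)⟫‖ ^ 2 + ‖⟪y j, π g (ξ j)⟫‖ ^ 2) / 2 :=
      ((hsq i).add (hsq' j)).div_const 2
    refine Summable.of_nonneg_of_le (fun g => norm_nonneg _) (fun g => ?_) hbound
    rw [norm_mul, RCLike.norm_conj]
    nlinarith [norm_nonneg ⟪x i, π g (ξ i)⟫, norm_nonneg ⟪y j, π g (ξ j)⟫,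
      sq_nonneg (‖⟪x i, π g (ξ i)⟫‖ - ‖⟪y j, π g (ξ j)⟫‖)]
  calc ∑' g : G, ⟪f, π g (∑ i, a i (ξ i))⟫ * (starRingEnd ℂ) ⟪f', π g (∑ i, b i (ξ i))⟫
      = ∑' g : G, ∑ i, ∑ j, ⟪x i, π g (ξ i)⟫ * (starRingEnd ℂ) ⟪y j, π g (ξ j)⟫ := by
        refine tsum_congr fun g => ?_
        rw [hLf g, hLf' g, map_sum, Finset.sum_mul_sum]
    _ = ∑ i, ∑ j, ∑' g : G, ⟪x i, π g (ξ i)⟫ * (starRingEnd ℂ) ⟪y j, π g (ξ j)⟫ := by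
        rw [Summable.tsum_finsetSum fun i _ => summable_sum fun j _ => hprod i j]
        exact Finset.sum_congr rfl fun i _ => Summable.tsum_finsetSum fun j _ => hprod i j
    _ = ∑ i, ⟪x i, y i⟫ := by
        refine Finset.sum_congr rfl fun i _ => ?_
        rw [Finset.sum_eq_single i]
        · exact (parseval_polar (hξ i) (hx i) (hy i)).tsum_eq
        · intro j _ hj
          exact hdisj i j (Ne.symm hj) (x i) (hx i) (y j) (hy j)
        · intro hmem
          exact absurd (Finset.mem_univ i) hmem
    _ = ⟪f, (∑ i, (a i) ∘L (adjoint (b i))) f'⟫ := by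
        rw [ContinuousLinearMap.sum_apply, inner_sum]
        refine Finset.sum_congr rfl fun i _ => ?_
        rw [ContinuousLinearMap.comp_apply]
        exact adjoint_inner_left (a i) (y i) f

end Complete

theorem stmt10 {G : Type*} [Group G] [Countable G]
    {H : Type*} [NormedAddCommGroup H] [InnerProductSpace ℂ H] [CompleteSpace H]
    (π : G →* (H ≃ₗᵢ[ℂ] H)) (N : ℕ) (ξ : Fin (N + 1) → H)
    (hξ0 : IsParsevalFrameVector π (ξ 0))
    (hξ : ∀ i, IsParsevalFrameVectorIn π (ξ i) (orbitSpan π (ξ i)))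
    (p : Fin (N + 1) → (H →L[ℂ] H))
    (hp : ∀ i, IsOrthoProjOnto (orbitSpan π (ξ i)) (p i))
    (hdisj : ∀ i j, i ≠ j → StronglyDisjointPairIn π π (ξ i) (ξ j)
      (orbitSpan π (ξ i)) (orbitSpan π (ξ j)))
    (hmax : ∀ ζ : H, IsBesselVector π ζ →
      (∀ i, StronglyDisjointPairIn π π ζ (ξ i) ⊤ (orbitSpan π (ξ i))) → ζ = 0)
    (η ζ : H) (hη : IsParsevalFrameVector π η) (hζ : IsParsevalFrameVector π ζ)
    (u v : Fin (N + 1) → (H →L[ℂ] H))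
    (hu : ∀ i, InCommutant π (u i)) (hv : ∀ i, InCommutant π (v i))
    (hup : ∀ i, (u i) ∘L (p i) = u i) (hvp : ∀ i, (v i) ∘L (p i) = v i)
    (husum : ∑ i, (u i) ∘L (ContinuousLinearMap.adjoint (u i)) = ContinuousLinearMap.id ℂ H)
    (hvsum : ∑ i, (v i) ∘L (ContinuousLinearMap.adjoint (v i)) = ContinuousLinearMap.id ℂ H)
    (hηdec : η = ∑ i, u i (ξ i)) (hζdec : ζ = ∑ i, v i (ξ i)) :
    (StronglyDisjointPairIn π π η ζ ⊤ ⊤ ↔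
      ∑ i, (v i) ∘L (ContinuousLinearMap.adjoint (u i)) = 0) ∧
    ((∃ U : H ≃ₗᵢ[ℂ] H, ∀ g : G, U (π g η) = π g ζ) ↔
      ∀ i j, (ContinuousLinearMap.adjoint (u i)) ∘L (u j) =
        (ContinuousLinearMap.adjoint (v i)) ∘L (v j)) := by
  classical
  subst hηdec hζdec
  have hdisj' : ∀ i j, i ≠ j → ∀ x ∈ orbitSpan π (ξ i), ∀ y ∈ orbitSpan π (ξ j),
      ∑' g : G, ⟪x, π g (ξ i)⟫ * (starRingEnd ℂ) ⟪y, π g (ξ j)⟫ = 0 :=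
    fun i j hij => hdisj i j hij
  constructor
  · -- part (a)
    constructor
    · intro hsd
      have hS : (∑ i, (u i) ∘L (ContinuousLinearMap.adjoint (v i))) = 0 := by
        ext w
        rw [ContinuousLinearMap.zero_apply]
        have hall : ∀ f : H,
            ⟪f, (∑ i, (u i) ∘L (ContinuousLinearMap.adjoint (v i))) w⟫ = 0 := by
          intro f
          rw [← core_tsum π ξ hξ hdisj' p hp u v hu hv hup hvp f w]
          exact hsd f Submodule.mem_top w Submodule.mem_top
        exact inner_self_eq_zero.mp (hall _)
      calc ∑ i, (v i) ∘L (ContinuousLinearMap.adjoint (u i))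
          = ContinuousLinearMap.adjoint (∑ i, (u i) ∘L (ContinuousLinearMap.adjoint (v i))) := by
            rw [map_sum]
            refine Finset.sum_congr rfl fun i _ => ?_
            rw [ContinuousLinearMap.adjoint_comp, ContinuousLinearMap.adjoint_adjoint]
        _ = 0 := by rw [hS]; exact map_zero _
    · intro h0 f _ w _
      rw [core_tsum π ξ hξ hdisj' p hp u v hu hv hup hvp f w]
      have hS : (∑ i, (u i) ∘L (ContinuousLinearMap.adjoint (v i))) = 0 := by
        calc ∑ i, (u i) ∘L (ContinuousLinearMap.adjoint (v i))
            = ContinuousLinearMap.adjoint (∑ i, (v i) ∘L (ContinuousLinearMap.adjoint (u i))) := by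
              rw [map_sum]
              refine Finset.sum_congr rfl fun i _ => ?_
              rw [ContinuousLinearMap.adjoint_comp, ContinuousLinearMap.adjoint_adjoint]
          _ = 0 := by rw [h0]; exact map_zero _
      rw [hS]
      simp
  · -- part (b)
    constructor
    · rintro ⟨U, hU⟩ i j
      have hUinner : ∀ (f w : H), ⟪f, U w⟫ = ⟪U.symm f, w⟫ := by
        intro f w
        conv_lhs => rw [← U.apply_symm_apply f]
        exact U.inner_map_map _ _
      have hkey : ∀ (jj : Fin (N + 1)) (f' : H), v jj f' = U (u jj f') := by
        intro jj f'0
        apply ext_inner_left ℂ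
        intro f
        set bfam : Fin (N + 1) → (H →L[ℂ] H) := fun i2 => if i2 = jj then p jj else 0 with hbfam
        have hbcom : ∀ i2, InCommutant π (bfam i2) := by
          intro i2
          by_cases hcase : i2 = jj
          · simpa [hbfam, hcase] using aux_proj_commutant π (ξ jj) (hp jj)
          · intro g z; simp [hbfam, hcase]
        have hbp' : ∀ i2, (bfam i2) ∘L (p i2) = bfam i2 := by
          intro i2
          by_cases hcase : i2 = jj
          · subst hcase
            simp only [hbfam, if_pos rfl]
            ext z
            exact aux_proj_fix (hp i2) (hp i2 z).1
          · simp [hbfam, hcase]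
        have hbsum : ∑ i2, bfam i2 (ξ i2) = ξ jj := by
          rw [Finset.sum_eq_single jj]
          · simp only [hbfam, if_pos rfl]
            exact aux_proj_fix (hp jj) (aux_self_mem_orbitSpan π (ξ jj))
          · intro b2 _ hb2; simp [hbfam, hb2]
          · intro hmem; exact absurd (Finset.mem_univ jj) hmem
        have hsum_v : ∑ i2, (v i2) ∘L (ContinuousLinearMap.adjoint (bfam i2)) = v jj := by
          rw [Finset.sum_eq_single jj]
          · simp only [hbfam, if_pos rfl]
            rw [aux_proj_adjoint (hp jj), hvp jj]
          · intro b2 _ hb2; simp [hbfam, hb2]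
          · intro hmem; exact absurd (Finset.mem_univ jj) hmem
        have hsum_u : ∑ i2, (u i2) ∘L (ContinuousLinearMap.adjoint (bfam i2)) = u jj := by
          rw [Finset.sum_eq_single jj]
          · simp only [hbfam, if_pos rfl]
            rw [aux_proj_adjoint (hp jj), hup jj]
          · intro b2 _ hb2; simp [hbfam, hb2]
          · intro hmem; exact absurd (Finset.mem_univ jj) hmem
        have e1 := core_tsum π ξ hξ hdisj' p hp v bfam hv hbcom hvp hbp' f f'0
        have e2 := core_tsum π ξ hξ hdisj' p hp u bfam hu hbcom hup hbp' (U.symm f) f'0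
        rw [hbsum, hsum_v] at e1
        rw [hbsum, hsum_u] at e2
        have hterm : ∀ g : G,
            ⟪f, π g (∑ i2, v i2 (ξ i2))⟫ = ⟪U.symm f, π g (∑ i2, u i2 (ξ i2))⟫ := by
          intro g
          rw [← hU g, hUinner]
        calc ⟪f, v jj f'0⟫
            = ∑' g : G, ⟪f, π g (∑ i2, v i2 (ξ i2))⟫ * (starRingEnd ℂ) ⟪f'0, π g (ξ jj)⟫ :=
              e1.symm
          _ = ∑' g : G, ⟪U.symm f, π g (∑ i2, u i2 (ξ i2))⟫ *
                (starRingEnd ℂ) ⟪f'0, π g (ξ jj)⟫ := tsum_congr fun g => by rw [hterm g]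
          _ = ⟪U.symm f, u jj f'0⟫ := e2
          _ = ⟪f, U (u jj f'0)⟫ := (hUinner f _).symm
      ext z
      apply ext_inner_left ℂ
      intro w
      rw [ContinuousLinearMap.comp_apply, ContinuousLinearMap.comp_apply,
        ContinuousLinearMap.adjoint_inner_right, ContinuousLinearMap.adjoint_inner_right]
      rw [hkey i w, hkey j z]
      exact (U.inner_map_map _ _).symm
    · intro h
      have husum' : ∑ i, u i * star (u i) = 1 := by
        simpa only [ContinuousLinearMap.mul_def, ContinuousLinearMap.star_eq_adjoint,
          ContinuousLinearMap.one_def] using husum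
      have hvsum' : ∑ i, v i * star (v i) = 1 := by
        simpa only [ContinuousLinearMap.mul_def, ContinuousLinearMap.star_eq_adjoint,
          ContinuousLinearMap.one_def] using hvsum
      have h' : ∀ i j, star (u i) * u j = star (v i) * v j := by
        intro i j
        simpa only [ContinuousLinearMap.mul_def, ContinuousLinearMap.star_eq_adjoint]
          using h i j
      set W : H →L[ℂ] H := ∑ i, v i * star (u i) with hW
      have hWstar : star W = ∑ i, u i * star (v i) := by
        rw [hW, star_sum]
        exact Finset.sum_congr rfl fun i _ => by rw [star_mul, star_star]
      have hWl : star W * W = 1 := by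
        rw [hWstar, hW]
        calc (∑ i, u i * star (v i)) * (∑ j2, v j2 * star (u j2))
            = ∑ i, ∑ j2, (u i * star (v i)) * (v j2 * star (u j2)) :=
              Finset.sum_mul_sum _ _ _ _
          _ = ∑ i, ∑ j2, (u i * star (u i)) * (u j2 * star (u j2)) := by
              refine Finset.sum_congr rfl fun i _ => Finset.sum_congr rfl fun j2 _ => ?_
              calc (u i * star (v i)) * (v j2 * star (u j2))
                  = u i * (star (v i) * v j2) * star (u j2) := by noncomm_ring
                _ = u i * (star (u i) * u j2) * star (u j2) := by rw [← h' i j2]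
                _ = (u i * star (u i)) * (u j2 * star (u j2)) := by noncomm_ring
          _ = (∑ i, u i * star (u i)) * (∑ j2, u j2 * star (u j2)) :=
              (Finset.sum_mul_sum _ _ _ _).symm
          _ = 1 := by rw [husum', one_mul]
      have hWr : W * star W = 1 := by
        rw [hWstar, hW]
        calc (∑ i, v i * star (u i)) * (∑ j2, u j2 * star (v j2))
            = ∑ i, ∑ j2, (v i * star (u i)) * (u j2 * star (v j2)) :=
              Finset.sum_mul_sum _ _ _ _
          _ = ∑ i, ∑ j2, (v i * star (v i)) * (v j2 * star (v j2)) := by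
              refine Finset.sum_congr rfl fun i _ => Finset.sum_congr rfl fun j2 _ => ?_
              calc (v i * star (u i)) * (u j2 * star (v j2))
                  = v i * (star (u i) * u j2) * star (v j2) := by noncomm_ring
                _ = v i * (star (v i) * v j2) * star (v j2) := by rw [h' i j2]
                _ = (v i * star (v i)) * (v j2 * star (v j2)) := by noncomm_ring
          _ = (∑ i, v i * star (v i)) * (∑ j2, v j2 * star (v j2)) :=
              (Finset.sum_mul_sum _ _ _ _).symm
          _ = 1 := by rw [hvsum', one_mul]
      have hWlx : ∀ z, star W (W z) = z := by
        intro z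
        have h1 := ContinuousLinearMap.ext_iff.mp hWl z
        simpa [ContinuousLinearMap.mul_apply] using h1
      have hWrx : ∀ z, W (star W z) = z := by
        intro z
        have h1 := ContinuousLinearMap.ext_iff.mp hWr z
        simpa [ContinuousLinearMap.mul_apply] using h1
      have hnorm : ∀ z, ‖W z‖ = ‖z‖ := by
        intro z
        have hinner : ⟪W z, W z⟫ = ⟪z, z⟫ := by
          have h1 := ContinuousLinearMap.adjoint_inner_right W z (W z)
          rw [← ContinuousLinearMap.star_eq_adjoint, hWlx z] at h1
          exact h1.symm
        rw [norm_eq_sqrt_re_inner (𝕜 := ℂ) (W z), norm_eq_sqrt_re_inner (𝕜 := ℂ) z, hinner]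
      have hWcom : InCommutant π W := by
        intro g z
        rw [hW]
        simp only [ContinuousLinearMap.sum_apply, ContinuousLinearMap.mul_apply]
        calc ∑ i, v i ((star (u i)) (π g z))
            = ∑ i, π g (v i ((star (u i)) z)) := by
              refine Finset.sum_congr rfl fun i _ => ?_
              rw [ContinuousLinearMap.star_eq_adjoint, aux_adjoint_commutant (hu i) g z,
                hv i g _]
          _ = π g (∑ i, v i ((star (u i)) z)) :=
              (map_sum (π g) (fun i => v i ((star (u i)) z)) Finset.univ).symm
      have hWeta : W (∑ i, u i (ξ i)) = ∑ i, v i (ξ i) := by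
        rw [map_sum]
        have hterm : ∀ j2, W (u j2 (ξ j2)) = (∑ i, v i * star (v i)) (v j2 (ξ j2)) := by
          intro j2
          rw [hW]
          simp only [ContinuousLinearMap.sum_apply, ContinuousLinearMap.mul_apply]
          refine Finset.sum_congr rfl fun i _ => ?_
          congr 1
          have h1 := ContinuousLinearMap.ext_iff.mp (h' i j2) (ξ j2)
          simpa [ContinuousLinearMap.mul_apply] using h1
        calc ∑ j2, W (u j2 (ξ j2))
            = ∑ j2, (∑ i, v i * star (v i)) (v j2 (ξ j2)) :=
              Finset.sum_congr rfl fun j2 _ => hterm j2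
          _ = ∑ j2, v j2 (ξ j2) := by
              rw [hvsum']
              exact Finset.sum_congr rfl fun j2 _ => rfl
      let Ulin : H ≃ₗ[ℂ] H :=
        { toFun := W
          map_add' := W.map_add
          map_smul' := W.map_smul
          invFun := fun z => (star W : H →L[ℂ] H) z
          left_inv := hWlx
          right_inv := hWrx }
      refine ⟨⟨Ulin, hnorm⟩, ?_⟩
      intro g
      show W (π g (∑ i, u i (ξ i))) = π g (∑ i, v i (ξ i))
      rw [hWcom g, hWeta]
end
end

section
/- Let G be a countable group, π a unitary representation of G on a complex Hilbert space H, and K a subgroup of G of finite index N. Suppose η ∈ H is a Parseval frame vector for H and the family {π(h)η : h ∈ K} is an orthogonal basis for the whole space H (that is, the vectors π(h)η, h ∈ K, are nonzero, pairwise orthogonal, and their span is dense in H). Then ‖η‖² = 1/N. -/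
noncomputable section

open scoped ComplexConjugate

local notation "⟪" x ", " y "⟫" => @inner ℂ _ _ x y

variable {G : Type*} [Group G]
variable {H : Type*} [NormedAddCommGroup H] [InnerProductSpace ℂ H]

section Aux13
variable {G : Type*} [Group G]
variable {H : Type*} [NormedAddCommGroup H] [InnerProductSpace ℂ H]
variable [CompleteSpace H]

lemma key_parseval13 (π : G →* (H ≃ₗᵢ[ℂ] H)) (K : Subgroup G) (η : H) (hη0 : η ≠ 0)
    (horth : ∀ h h' : K, h ≠ h' → (inner ℂ (π (h : G) η) (π (h' : G) η) : ℂ) = 0)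
    (hdense : (Submodule.span ℂ (Set.range fun h : K => π (h : G) η)).topologicalClosure = ⊤)
    (x : H) :
    HasSum (fun h : K => ‖⟪x, π (h : G) η⟫‖ ^ 2) (‖η‖ ^ 2 * ‖x‖ ^ 2) := by
  have hn : ‖η‖ ≠ 0 := norm_ne_zero_iff.mpr hη0
  set b : K → H := fun h => ((‖η‖⁻¹ : ℝ) : ℂ) • π (h : G) η with hb
  have hon : Orthonormal ℂ b := by
    classical
    rw [orthonormal_iff_ite]
    intro h h'
    by_cases hhh : h = h'
    · subst hhh
      simp only [hb, inner_smul_left, inner_smul_right, if_pos rfl]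
      rw [inner_self_eq_norm_sq_to_K, (π (h : G)).norm_map, Complex.conj_ofReal]
      have hcn : (‖η‖ : ℂ) ≠ 0 := by exact_mod_cast hn
      push_cast
      field_simp
      rfl
    · simp only [hb, inner_smul_left, inner_smul_right, if_neg hhh, horth h h' hhh, mul_zero]
  have hsp : ⊤ ≤ (Submodule.span ℂ (Set.range b)).topologicalClosure := by
    have hcn : (‖η‖ : ℂ) ≠ 0 := by exact_mod_cast hn
    have hspan : Submodule.span ℂ (Set.range b)
        = Submodule.span ℂ (Set.range fun h : K => π (h : G) η) := by
      apply le_antisymm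
      · rw [Submodule.span_le]
        rintro _ ⟨h, rfl⟩
        exact Submodule.smul_mem _ _ (Submodule.subset_span ⟨h, rfl⟩)
      · rw [Submodule.span_le]
        rintro _ ⟨h, rfl⟩
        have hv : π (h : G) η = ((‖η‖ : ℝ) : ℂ) • b h := by
          simp only [hb, smul_smul]
          rw [← Complex.ofReal_mul, mul_inv_cancel₀ hn]
          simp
        show π (h : G) η ∈ (Submodule.span ℂ (Set.range b) : Set H)
        rw [hv]
        exact Submodule.smul_mem _ _ (Submodule.subset_span ⟨h, rfl⟩)
    rw [hspan, hdense]
  let B : HilbertBasis K ℂ H := HilbertBasis.mk hon hsp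
  have hBs : HasSum (fun h : K => ⟪x, B h⟫ * ⟪B h, x⟫) ⟪x, x⟫ :=
    B.hasSum_inner_mul_inner x x
  have hcoe : ⇑B = b := HilbertBasis.coe_mk hon hsp
  rw [hcoe] at hBs
  have heq : (fun h : K => ⟪x, b h⟫ * ⟪b h, x⟫)
      = fun h : K => (((‖η‖ ^ 2)⁻¹ * ‖⟪x, π (h : G) η⟫‖ ^ 2 : ℝ) : ℂ) := by
    funext h
    rw [← inner_conj_symm (b h) x, RCLike.mul_conj]
    simp only [hb, inner_smul_right, norm_mul, Complex.norm_real, norm_inv, norm_norm]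
    push_cast
    ring_nf
    norm_cast
  rw [heq, show (⟪x, x⟫ : ℂ) = ((‖x‖ ^ 2 : ℝ) : ℂ) by
      rw [inner_self_eq_norm_sq_to_K]; norm_cast] at hBs
  have hRe : HasSum (fun h : K => (‖η‖ ^ 2)⁻¹ * ‖⟪x, π (h : G) η⟫‖ ^ 2) (‖x‖ ^ 2) :=
    Complex.hasSum_ofReal.mp hBs
  have := hRe.mul_left (‖η‖ ^ 2)
  have hmul : (fun h : K => ‖η‖ ^ 2 * ((‖η‖ ^ 2)⁻¹ * ‖⟪x, π (h : G) η⟫‖ ^ 2))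
      = fun h : K => ‖⟪x, π (h : G) η⟫‖ ^ 2 := by
    funext h
    field_simp
  rwa [hmul] at this

end Aux13

theorem stmt13 {G : Type*} [Group G] [Countable G]
    {H : Type*} [NormedAddCommGroup H] [InnerProductSpace ℂ H] [CompleteSpace H]
    (π : G →* (H ≃ₗᵢ[ℂ] H)) (K : Subgroup G) (N : ℕ) (hN : 0 < N)
    (hidx : K.index = N) (η : H) (hη : IsParsevalFrameVector π η)
    (hne : ∀ h : K, π (h : G) η ≠ 0)
    (horth : ∀ h h' : K, h ≠ h' → (inner ℂ (π (h : G) η) (π (h' : G) η) : ℂ) = 0)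
    (hdense : (Submodule.span ℂ (Set.range fun h : K => π (h : G) η)).topologicalClosure = ⊤) :
    ‖η‖ ^ 2 = 1 / (N : ℝ) := by
  classical
  have hη0 : η ≠ 0 := by
    have := hne 1
    simpa using this
  have hn : ‖η‖ ≠ 0 := norm_ne_zero_iff.mpr hη0
  have hnsq : (0:ℝ) < ‖η‖ ^ 2 := by positivity
  set F : G → ℝ := fun g => ‖⟪η, π g η⟫‖ ^ 2 with hF
  have htsum : ∑' g : G, F g = ‖η‖ ^ 2 := hη η
  have hsumm : Summable F := by
    by_contra hns
    rw [tsum_eq_zero_of_not_summable hns] at htsum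
    exact hnsq.ne htsum
  have hHas : HasSum F (‖η‖ ^ 2) := htsum ▸ hsumm.hasSum
  -- finiteness of the quotient
  have hKfi : K.FiniteIndex := ⟨by omega⟩
  have hfin : Finite (G ⧸ K) := K.finite_quotient_of_finiteIndex
  have : Fintype (G ⧸ K) := Fintype.ofFinite _
  -- fiberwise sum
  have hfib := hHas.tsum_fiberwise (QuotientGroup.mk : G → G ⧸ K)
  -- each fiber sums to ‖η‖^4
  have hfiber : ∀ q : G ⧸ K,
      (∑' g : (QuotientGroup.mk : G → G ⧸ K) ⁻¹' {q}, F g) = ‖η‖ ^ 2 * ‖η‖ ^ 2 := by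
    intro q
    set t : G := q.out with ht
    have htq : (QuotientGroup.mk t : G ⧸ K) = q := QuotientGroup.out_eq' q
    -- equivalence between K and the fiber
    let e : K ≃ ((QuotientGroup.mk : G → G ⧸ K) ⁻¹' {q}) :=
      { toFun := fun h => ⟨t * (h : G), by
          simp only [Set.mem_preimage, Set.mem_singleton_iff]
          rw [QuotientGroup.mk_mul_of_mem t h.2, htq]⟩
        invFun := fun g => ⟨t⁻¹ * (g : G), by
          have hg : (QuotientGroup.mk (g : G) : G ⧸ K) = q := g.2
          have : (QuotientGroup.mk t : G ⧸ K) = QuotientGroup.mk (g : G) := by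
            rw [htq, hg]
          exact (QuotientGroup.eq.mp this)⟩
        left_inv := fun h => by
          ext; simp
        right_inv := fun g => by
          ext; simp }
    rw [← e.tsum_eq]
    have hterm : ∀ h : K, F ((e h : G)) = ‖⟪π t⁻¹ η, π (h : G) η⟫‖ ^ 2 := by
      intro h
      have hfix : (π t) ((π t⁻¹) η) = η := by
        have h1 : π t * π t⁻¹ = 1 := by rw [← map_mul, mul_inv_cancel, map_one]
        calc (π t) ((π t⁻¹) η) = (π t * π t⁻¹) η := rfl
          _ = η := by rw [h1]; rfl
      have h2 : ⟪η, π (t * (h : G)) η⟫ = ⟪(π t⁻¹) η, π (h : G) η⟫ := by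
        calc ⟪η, π (t * (h : G)) η⟫
            = ⟪(π t) ((π t⁻¹) η), (π t) ((π (h : G)) η)⟫ := by rw [hfix, map_mul]; rfl
          _ = ⟪(π t⁻¹) η, (π (h : G)) η⟫ := (π t).inner_map_map _ _
      show ‖⟪η, π (t * (h : G)) η⟫‖ ^ 2 = _
      rw [h2]
    calc (∑' h : K, F ((e h : G))) = ∑' h : K, ‖⟪π t⁻¹ η, π (h : G) η⟫‖ ^ 2 := by
          exact tsum_congr hterm
      _ = ‖η‖ ^ 2 * ‖π t⁻¹ η‖ ^ 2 :=
          (key_parseval13 π K η hη0 horth hdense (π t⁻¹ η)).tsum_eq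
      _ = ‖η‖ ^ 2 * ‖η‖ ^ 2 := by rw [(π t⁻¹).norm_map]
  have hfib2 : HasSum (fun _ : G ⧸ K => ‖η‖ ^ 2 * ‖η‖ ^ 2) (‖η‖ ^ 2) := by
    simpa only [hfiber] using hfib
  have hcard : HasSum (fun _ : G ⧸ K => ‖η‖ ^ 2 * ‖η‖ ^ 2)
      ((N : ℝ) * (‖η‖ ^ 2 * ‖η‖ ^ 2)) := by
    have := hasSum_fintype (fun _ : G ⧸ K => ‖η‖ ^ 2 * ‖η‖ ^ 2)
    rwa [Finset.sum_const, nsmul_eq_mul, show (Finset.univ.card : ℝ) = (N : ℝ) by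
      rw [Finset.card_univ]
      norm_cast
      rw [← Nat.card_eq_fintype_card]
      exact hidx ▸ rfl] at this
  have hkey : ‖η‖ ^ 2 = (N : ℝ) * (‖η‖ ^ 2 * ‖η‖ ^ 2) := hfib2.unique hcard
  have hNpos : (0:ℝ) < N := by exact_mod_cast hN
  field_simp
  nlinarith [hnsq]
end
end

section
/- Let G be a countable group and K a subgroup of G of finite index N with a complete set a₀,…,a_{N−1} of representatives of the left cosets of K in G. Let λ be the left regular representation of G on ℓ²(G), let p₁' be an orthogonal projection on ℓ²(G) commuting with λ(g) for all g ∈ G, let M := p₁'ℓ²(G), and let η ∈ M be such that {√N · λ(h)η : h ∈ K} is an orthonormal basis of M. Suppose ũ₀,…,ũ_{N−1} are unitary operators of M such that each ũᵢ commutes with λ(h)|_M for all h ∈ K, and ∑_{k=0}^{N−1} λ(a_k)ũᵢ(ũⱼ)*λ(a_k)* = 0 as operators on M whenever i ≠ j. Then: (1) for each i, {√N · λ(h)ũᵢη : h ∈ K} is an orthonormal basis of M; (2) ũ₀η,…,ũ_{N−1}η is a strongly disjoint N-tuple of Parseval frame vectors for M (with the representation g ↦ λ(g)|_M). -/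
noncomputable section

open scoped ComplexConjugate

local notation "⟪" x ", " y "⟫" => @inner ℂ _ _ x y

variable {G : Type*} [Group G]
variable {H : Type*} [NormedAddCommGroup H] [InnerProductSpace ℂ H]

set_option maxHeartbeats 2000000

theorem stmt15 {G : Type*} [Group G] [Countable G]
    {H : Type*} [NormedAddCommGroup H] [InnerProductSpace ℂ H] [CompleteSpace H]
    (δ : G → H) (hδon : Orthonormal ℂ δ)
    (hδdense : (Submodule.span ℂ (Set.range δ)).topologicalClosure = ⊤)
    (lam : G →* (H ≃ₗᵢ[ℂ] H)) (hlam : ∀ g h : G, lam g (δ h) = δ (g * h))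
    (K : Subgroup G) (N : ℕ) (hN : 0 < N) (hidx : K.index = N)
    (a : Fin N → G) (ha : ∀ g : G, ∃! k : Fin N, (a k)⁻¹ * g ∈ K)
    (p₁ : H →L[ℂ] H) (M : Submodule ℂ H) (hp₁ : IsOrthoProjOnto M p₁)
    (hp₁comm : ∀ (g : G) (x : H), p₁ (lam g x) = lam g (p₁ x))
    (η : H) (hηM : η ∈ M)
    (hON : Orthonormal ℂ (fun h : K => (Real.sqrt N : ℂ) • lam (h : G) η))
    (hdense : (Submodule.span ℂ (Set.range fun h : K => lam (h : G) η)).topologicalClosure = M)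
    (u : Fin N → (H →L[ℂ] H))
    (hsupp : ∀ i, (u i) ∘L p₁ = u i ∧ p₁ ∘L (u i) = u i)
    (huni : ∀ i, (ContinuousLinearMap.adjoint (u i)) ∘L (u i) = p₁ ∧
      (u i) ∘L (ContinuousLinearMap.adjoint (u i)) = p₁)
    (hcomm : ∀ i, ∀ h : K, ∀ x : H, u i (lam (h : G) x) = lam (h : G) (u i x))
    (hzero : ∀ i j, i ≠ j → ∀ x : H,
      ∑ k, lam (a k) ((u i) ((ContinuousLinearMap.adjoint (u j)) ((lam (a k)).symm x))) = 0) :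
    (∀ i, Orthonormal ℂ (fun h : K => (Real.sqrt N : ℂ) • lam (h : G) (u i η)) ∧
      (Submodule.span ℂ
        (Set.range fun h : K => lam (h : G) (u i η))).topologicalClosure = M) ∧
    (∀ i, IsParsevalFrameVectorIn lam (u i η) M) ∧
    StronglyDisjointTuple lam (fun i => u i η) (fun _ => M) := by
  
  classical
  -- M is closed, hence complete
  have hMclosed : IsClosed (M : Set H) := by
    rw [← hdense]; exact Submodule.isClosed_topologicalClosure _
  haveI : CompleteSpace M := hMclosed.completeSpace_coe
  have hpmem : ∀ x : H, p₁ x ∈ M := fun x => (hp₁ x).1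
  have hpM : ∀ x ∈ M, p₁ x = x := by
    intro x hx
    have h1 : x - p₁ x ∈ M := Submodule.sub_mem M hx (hpmem x)
    have h2 : x - p₁ x ∈ Mᗮ := (hp₁ x).2
    have h0 : x - p₁ x = 0 := Submodule.disjoint_def.mp M.orthogonal_disjoint _ h1 h2
    have := sub_eq_zero.mp h0
    exact this.symm
  have hMinv : ∀ (g : G) (x : H), x ∈ M → lam g x ∈ M := by
    intro g x hx
    have h1 : p₁ (lam g x) = lam g x := by rw [hp₁comm, hpM x hx]
    rw [← h1]; exact hpmem _
  -- p₁ is self-adjoint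
  have hp₁sa : ContinuousLinearMap.adjoint p₁ = p₁ := by
    symm
    rw [ContinuousLinearMap.eq_adjoint_iff]
    intro x y
    have hy : y = p₁ y + (y - p₁ y) := by abel
    have hx : x = p₁ x + (x - p₁ x) := by abel
    have e1 : ⟪p₁ x, y - p₁ y⟫ = 0 :=
      (Submodule.mem_orthogonal _ _).mp (hp₁ y).2 _ (hpmem x)
    have e2 : ⟪x - p₁ x, p₁ y⟫ = 0 :=
      (Submodule.mem_orthogonal' _ _).mp (hp₁ x).2 _ (hpmem y)
    calc ⟪p₁ x, y⟫ = ⟪p₁ x, p₁ y + (y - p₁ y)⟫ := by rw [← hy]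
      _ = ⟪p₁ x, p₁ y⟫ := by rw [inner_add_right, e1, add_zero]
      _ = ⟪p₁ x + (x - p₁ x), p₁ y⟫ := by rw [inner_add_left, e2, add_zero]
      _ = ⟪x, p₁ y⟫ := by rw [← hx]
  have huM : ∀ i (x : H), u i x ∈ M := by
    intro i x
    have h1 : p₁ (u i x) = u i x := by
      have := (hsupp i).2
      calc p₁ (u i x) = (p₁ ∘L u i) x := rfl
        _ = u i x := by rw [this]
    rw [← h1]; exact hpmem _
  have hAU : ∀ i, p₁ ∘L ContinuousLinearMap.adjoint (u i) = ContinuousLinearMap.adjoint (u i) := by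
    intro i
    have h1 : ContinuousLinearMap.adjoint (u i ∘L p₁) = ContinuousLinearMap.adjoint (u i) := by rw [(hsupp i).1]
    rwa [ContinuousLinearMap.adjoint_comp, hp₁sa] at h1
  have hAM : ∀ i (x : H), ContinuousLinearMap.adjoint (u i) x ∈ M := by
    intro i x
    have h1 : p₁ (ContinuousLinearMap.adjoint (u i) x) = ContinuousLinearMap.adjoint (u i) x := by
      calc p₁ (ContinuousLinearMap.adjoint (u i) x) = (p₁ ∘L ContinuousLinearMap.adjoint (u i)) x := rfl
        _ = ContinuousLinearMap.adjoint (u i) x := by rw [hAU i]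
    rw [← h1]; exact hpmem _
  have hUA : ∀ i (x : H), u i (ContinuousLinearMap.adjoint (u i) x) = p₁ x := by
    intro i x
    calc u i (ContinuousLinearMap.adjoint (u i) x) = (u i ∘L ContinuousLinearMap.adjoint (u i)) x := rfl
      _ = p₁ x := by rw [(huni i).2]
  -- lam facts
  have hlam_mul : ∀ (g g' : G) (x : H), lam (g * g') x = lam g (lam g' x) := by
    intro g g' x
    rw [map_mul]
    rfl
  have hlam_inv : ∀ (g : G) (x : H), lam g (lam g⁻¹ x) = x := by
    intro g x
    rw [← hlam_mul, mul_inv_cancel, map_one]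
    rfl
  have hlam_symm : ∀ (g : G) (x : H), (lam g).symm x = lam g⁻¹ x := by
    intro g x
    calc (lam g).symm x = (lam g).symm (lam g (lam g⁻¹ x)) := by rw [hlam_inv]
      _ = lam g⁻¹ x := (lam g).symm_apply_apply _
  have hsymmM : ∀ (g : G) (x : H), x ∈ M → (lam g).symm x ∈ M := by
    intro g x hx
    rw [hlam_symm]
    exact hMinv _ _ hx
  have happly_symm : ∀ (g : G) (x : H), lam g ((lam g).symm x) = x := fun g x =>
    (lam g).apply_symm_apply x
  have hinner_shift : ∀ (g : G) (v y : H), ⟪v, lam g y⟫ = ⟪(lam g).symm v, y⟫ := by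
    intro g v y
    conv_lhs => rw [← happly_symm g v]
    exact LinearIsometryEquiv.inner_map_map _ _ _
  have hinner_shift' : ∀ (g : G) (v y : H), ⟪lam g v, y⟫ = ⟪v, (lam g).symm y⟫ := by
    intro g v y
    conv_lhs => rw [← happly_symm g y]
    exact LinearIsometryEquiv.inner_map_map _ _ _
  -- the scalar c = sqrt N
  set c : ℂ := (Real.sqrt N : ℂ) with hc
  have hNR : (0 : ℝ) ≤ N := Nat.cast_nonneg N
  have hcc : c * c = (N : ℂ) := by
    rw [hc, ← Complex.ofReal_mul, Real.mul_self_sqrt hNR]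
    norm_num
  have hNne : (N : ℂ) ≠ 0 := by
    exact_mod_cast Nat.cast_ne_zero.mpr hN.ne'
  have hcne : c ≠ 0 := by
    intro h
    rw [h, mul_zero] at hcc
    exact hNne hcc.symm
  have hconjc : (starRingEnd ℂ) c = c := by
    rw [hc, Complex.conj_ofReal]
  -- the Hilbert basis of M
  have he₀M : ∀ h : K, c • lam (h : G) η ∈ M :=
    fun h => Submodule.smul_mem _ _ (hMinv _ _ hηM)
  set v' : K → M := fun h => ⟨c • lam (h : G) η, he₀M h⟩ with hv'
  have hv'on : Orthonormal ℂ v' := by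
    rw [← M.subtypeₗᵢ.orthonormal_comp_iff]
    exact hON
  have hspan_scaled : Submodule.span ℂ (Set.range fun h : K => c • lam (h : G) η)
      = Submodule.span ℂ (Set.range fun h : K => lam (h : G) η) := by
    apply le_antisymm
    · rw [Submodule.span_le]
      rintro x ⟨h, rfl⟩
      exact Submodule.smul_mem _ _ (Submodule.subset_span ⟨h, rfl⟩)
    · rw [Submodule.span_le]
      rintro x ⟨h, rfl⟩
      have hmem := Submodule.smul_mem
        (Submodule.span ℂ (Set.range fun h : K => c • lam (h : G) η)) c⁻¹
        (Submodule.subset_span ⟨h, rfl⟩)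
      simpa [smul_smul, inv_mul_cancel₀ hcne] using hmem
  have hv'sp : ⊤ ≤ (Submodule.span ℂ (Set.range v')).topologicalClosure := by
    intro x _
    rw [← SetLike.mem_coe, Submodule.topologicalClosure_coe, closure_subtype]
    have h2 : Submodule.map M.subtype (Submodule.span ℂ (Set.range v'))
        = Submodule.span ℂ (Set.range fun h : K => lam (h : G) η) := by
      rw [Submodule.map_span, ← hspan_scaled]
      congr 1
      ext y
      constructor
      · rintro ⟨z, ⟨h, rfl⟩, rfl⟩
        exact ⟨h, rfl⟩
      · rintro ⟨h, rfl⟩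
        exact ⟨v' h, ⟨h, rfl⟩, rfl⟩
    have himg : Subtype.val '' ((Submodule.span ℂ (Set.range v') : Submodule ℂ M) : Set M)
        = ((Submodule.span ℂ (Set.range fun h : K => lam (h : G) η)) : Set H) := by
      have h1 : Subtype.val '' ((Submodule.span ℂ (Set.range v') : Submodule ℂ M) : Set M)
          = ((Submodule.map M.subtype (Submodule.span ℂ (Set.range v'))) : Set H) := rfl
      rw [h1, h2]
    rw [himg]
    have : closure ((Submodule.span ℂ (Set.range fun h : K => lam (h : G) η)) : Set H)
        = (M : Set H) := by
      rw [← Submodule.topologicalClosure_coe, hdense]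
    rw [this]
    exact x.2
  set b : HilbertBasis K ℂ M := HilbertBasis.mk hv'on hv'sp with hb
  have hbcoe : ∀ h : K, (b h : H) = c • lam (h : G) η := by
    intro h
    rw [hb, HilbertBasis.coe_mk]
  -- key inner computation
  have hinner_u : ∀ i (v : H) (h : K), ⟪v, lam (h : G) (u i η)⟫ = ⟪ContinuousLinearMap.adjoint (u i) v, lam (h : G) η⟫ := by
    intro i v h
    rw [← hcomm i h η, ContinuousLinearMap.adjoint_inner_left]
  -- master lemma, part 1 : the sum over K
  have lemInner : ∀ (i j : Fin N) (v w : H), v ∈ M → w ∈ M →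
      HasSum (fun h : K => ⟪v, lam (h : G) (u i η)⟫ * (starRingEnd ℂ) ⟪w, lam (h : G) (u j η)⟫)
        ((N : ℂ)⁻¹ * ⟪ContinuousLinearMap.adjoint (u i) v, ContinuousLinearMap.adjoint (u j) w⟫) := by
    intro i j v w hv hw
    have hbs := b.hasSum_inner_mul_inner ⟨ContinuousLinearMap.adjoint (u i) v, hAM i v⟩ ⟨ContinuousLinearMap.adjoint (u j) w, hAM j w⟩
    have hbs2 := hbs.mul_left (N : ℂ)⁻¹
    have hfun : (fun h : K => (N : ℂ)⁻¹ *
        (⟪(⟨ContinuousLinearMap.adjoint (u i) v, hAM i v⟩ : M), b h⟫ * ⟪b h, (⟨ContinuousLinearMap.adjoint (u j) w, hAM j w⟩ : M)⟫))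
        = fun h : K => ⟪v, lam (h : G) (u i η)⟫ * (starRingEnd ℂ) ⟪w, lam (h : G) (u j η)⟫ := by
      funext h
      rw [Submodule.coe_inner, Submodule.coe_inner]
      show (N : ℂ)⁻¹ * (⟪ContinuousLinearMap.adjoint (u i) v, (b h : H)⟫ *
          ⟪(b h : H), ContinuousLinearMap.adjoint (u j) w⟫) = _
      rw [hbcoe h, hinner_u i v h, hinner_u j w h,
        inner_conj_symm (lam (h : G) η) (ContinuousLinearMap.adjoint (u j) w),
        inner_smul_right, inner_smul_left, hconjc]
      have hNcc : (N : ℂ)⁻¹ * (c * c) = 1 := by rw [hcc, inv_mul_cancel₀ hNne]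
      set X := ⟪ContinuousLinearMap.adjoint (u i) v, lam (h : G) η⟫
      set Y := ⟪lam (h : G) η, ContinuousLinearMap.adjoint (u j) w⟫
      linear_combination X * Y * hNcc
    rw [hfun] at hbs2
    have hval : ⟪(⟨ContinuousLinearMap.adjoint (u i) v, hAM i v⟩ : M), (⟨ContinuousLinearMap.adjoint (u j) w, hAM j w⟩ : M)⟫
        = ⟪ContinuousLinearMap.adjoint (u i) v, ContinuousLinearMap.adjoint (u j) w⟫ := Submodule.coe_inner _ _ _
    rw [hval] at hbs2
    exact hbs2
  -- master lemma, part 2 : the sum over a coset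
  have lemCoset : ∀ (i j : Fin N) (k : Fin N) (v w : H), v ∈ M → w ∈ M →
      HasSum (fun h : K => ⟪v, lam (a k * (h : G)) (u i η)⟫ *
          (starRingEnd ℂ) ⟪w, lam (a k * (h : G)) (u j η)⟫)
        ((N : ℂ)⁻¹ * ⟪lam (a k) (u j (ContinuousLinearMap.adjoint (u i) ((lam (a k)).symm v))), w⟫) := by
    intro i j k v w hv hw
    have hvk : (lam (a k)).symm v ∈ M := hsymmM _ _ hv
    have hwk : (lam (a k)).symm w ∈ M := hsymmM _ _ hw
    have h1 := lemInner i j _ _ hvk hwk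
    have hfun : (fun h : K => ⟪(lam (a k)).symm v, lam (h : G) (u i η)⟫ *
        (starRingEnd ℂ) ⟪(lam (a k)).symm w, lam (h : G) (u j η)⟫)
        = fun h : K => ⟪v, lam (a k * (h : G)) (u i η)⟫ *
          (starRingEnd ℂ) ⟪w, lam (a k * (h : G)) (u j η)⟫ := by
      funext h
      rw [hlam_mul (a k) (h : G) (u i η), hlam_mul (a k) (h : G) (u j η),
        hinner_shift (a k) v (lam (h : G) (u i η)), hinner_shift (a k) w (lam (h : G) (u j η))]
    rw [hfun] at h1
    have hval : ⟪ContinuousLinearMap.adjoint (u i) ((lam (a k)).symm v), ContinuousLinearMap.adjoint (u j) ((lam (a k)).symm w)⟫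
        = ⟪lam (a k) (u j (ContinuousLinearMap.adjoint (u i) ((lam (a k)).symm v))), w⟫ := by
      rw [ContinuousLinearMap.adjoint_inner_right, hinner_shift']
    rw [hval] at h1
    exact h1
  -- the coset decomposition equivalence
  have hbij : Function.Bijective (fun p : Fin N × K => a p.1 * ((p.2 : G))) := by
    constructor
    · rintro ⟨k, h⟩ ⟨k', h'⟩ heq
      simp only at heq
      obtain ⟨k₀, _, huniq⟩ := ha (a k * (h : G))
      have hk1 : (a k)⁻¹ * (a k * (h : G)) ∈ K := by
        rw [← mul_assoc, inv_mul_cancel, one_mul]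
        exact h.2
      have hk2 : (a k')⁻¹ * (a k * (h : G)) ∈ K := by
        rw [heq, ← mul_assoc, inv_mul_cancel, one_mul]
        exact h'.2
      have e1 : k = k₀ := huniq k hk1
      have e2 : k' = k₀ := huniq k' hk2
      have ekk : k = k' := e1.trans e2.symm
      subst ekk
      have : (h : G) = (h' : G) := mul_left_cancel heq
      exact Prod.ext rfl (Subtype.ext this)
    · intro g
      obtain ⟨k, hk, -⟩ := ha g
      refine ⟨⟨k, ⟨(a k)⁻¹ * g, hk⟩⟩, ?_⟩
      simp [← mul_assoc]
  let eqv : (Fin N × K) ≃ G := Equiv.ofBijective _ hbij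
  have heqv_apply : ∀ p : Fin N × K, eqv p = a p.1 * ((p.2 : G)) := fun p => rfl
  -- master lemma
  have lemProd : ∀ (i j : Fin N) (v w : H), v ∈ M → w ∈ M →
      HasSum (fun g : G => ⟪v, lam g (u i η)⟫ * (starRingEnd ℂ) ⟪w, lam g (u j η)⟫)
        (if i = j then ⟪v, w⟫ else 0) := by
    intro i j v w hv hw
    have key : HasSum (fun p : Fin N × K => ⟪v, lam (a p.1 * ((p.2 : G))) (u i η)⟫ *
        (starRingEnd ℂ) ⟪w, lam (a p.1 * ((p.2 : G))) (u j η)⟫)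
        (∑ k, (N : ℂ)⁻¹ *
          ⟪lam (a k) (u j (ContinuousLinearMap.adjoint (u i) ((lam (a k)).symm v))), w⟫) := by
      have h1 : ∀ k : Fin N, HasSum
          (fun p : Fin N × K => if p.1 = k then ⟪v, lam (a p.1 * ((p.2 : G))) (u i η)⟫ *
            (starRingEnd ℂ) ⟪w, lam (a p.1 * ((p.2 : G))) (u j η)⟫ else 0)
          ((N : ℂ)⁻¹ *
            ⟪lam (a k) (u j (ContinuousLinearMap.adjoint (u i) ((lam (a k)).symm v))), w⟫) := by
        intro k
        have hinj : Function.Injective (fun h : K => ((k, h) : Fin N × K)) := by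
          intro x y hxy
          simpa using hxy
        have hvanish : ∀ p ∉ Set.range (fun h : K => ((k, h) : Fin N × K)),
            (if p.1 = k then ⟪v, lam (a p.1 * ((p.2 : G))) (u i η)⟫ *
              (starRingEnd ℂ) ⟪w, lam (a p.1 * ((p.2 : G))) (u j η)⟫ else 0) = 0 := by
          rintro ⟨k', h⟩ hp
          have hne : k' ≠ k := by
            intro hk'
            exact hp ⟨h, by rw [hk']⟩
          simp [hne]
        rw [← hinj.hasSum_iff hvanish]
        have hcompeq : ((fun p : Fin N × K => if p.1 = k then
            ⟪v, lam (a p.1 * ((p.2 : G))) (u i η)⟫ *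
            (starRingEnd ℂ) ⟪w, lam (a p.1 * ((p.2 : G))) (u j η)⟫ else 0) ∘
            (fun h : K => ((k, h) : Fin N × K)))
            = fun h : K => ⟪v, lam (a k * ((h : G))) (u i η)⟫ *
              (starRingEnd ℂ) ⟪w, lam (a k * ((h : G))) (u j η)⟫ := by
          funext h
          simp
        rw [hcompeq]
        exact lemCoset i j k v w hv hw
      have h2 := hasSum_sum (s := Finset.univ) (fun k _ => h1 k)
      have h3 : (fun p : Fin N × K => ∑ k, if p.1 = k then
          ⟪v, lam (a p.1 * ((p.2 : G))) (u i η)⟫ *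
          (starRingEnd ℂ) ⟪w, lam (a p.1 * ((p.2 : G))) (u j η)⟫ else 0)
          = fun p : Fin N × K => ⟪v, lam (a p.1 * ((p.2 : G))) (u i η)⟫ *
            (starRingEnd ℂ) ⟪w, lam (a p.1 * ((p.2 : G))) (u j η)⟫ := by
        funext p
        rw [Finset.sum_ite_eq Finset.univ p.1]
        simp
      rwa [h3] at h2
    have h4 : HasSum (fun g : G => ⟪v, lam g (u i η)⟫ * (starRingEnd ℂ) ⟪w, lam g (u j η)⟫)
        (∑ k, (N : ℂ)⁻¹ *
          ⟪lam (a k) (u j (ContinuousLinearMap.adjoint (u i) ((lam (a k)).symm v))), w⟫) := by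
      rw [← Equiv.hasSum_iff eqv]
      have : ((fun g : G => ⟪v, lam g (u i η)⟫ * (starRingEnd ℂ) ⟪w, lam g (u j η)⟫) ∘ eqv)
          = fun p : Fin N × K => ⟪v, lam (a p.1 * ((p.2 : G))) (u i η)⟫ *
            (starRingEnd ℂ) ⟪w, lam (a p.1 * ((p.2 : G))) (u j η)⟫ := by
        funext p
        simp only [Function.comp_apply, heqv_apply]
      rw [this]
      exact key
    have hval : (∑ k, (N : ℂ)⁻¹ *
        ⟪lam (a k) (u j (ContinuousLinearMap.adjoint (u i) ((lam (a k)).symm v))), w⟫)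
        = if i = j then ⟪v, w⟫ else 0 := by
      by_cases hij : i = j
      · subst hij
        rw [if_pos rfl]
        have htk : ∀ k : Fin N, (N : ℂ)⁻¹ *
            ⟪lam (a k) (u i (ContinuousLinearMap.adjoint (u i) ((lam (a k)).symm v))), w⟫
            = (N : ℂ)⁻¹ * ⟪v, w⟫ := by
          intro k
          rw [hUA, hpM _ (hsymmM _ _ hv), happly_symm]
        rw [Finset.sum_congr rfl (fun k _ => htk k), Finset.sum_const, Finset.card_univ,
          Fintype.card_fin, nsmul_eq_mul]
        rw [← mul_assoc, mul_inv_cancel₀ hNne, one_mul]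
      · rw [if_neg hij]
        rw [← Finset.mul_sum, ← sum_inner, hzero j i (Ne.symm hij) v, inner_zero_left, mul_zero]
    rw [hval] at h4
    exact h4
  -- real-part helper
  have hre : ∀ z : ℂ, Complex.reCLM (z * (starRingEnd ℂ) z) = ‖z‖ ^ 2 := by
    intro z
    rw [Complex.reCLM_apply, Complex.mul_conj, Complex.ofReal_re, Complex.normSq_eq_norm_sq]
  have hre_inner : ∀ x : H, Complex.reCLM ⟪x, x⟫ = ‖x‖ ^ 2 := by
    intro x
    rw [inner_self_eq_norm_sq_to_K (𝕜 := ℂ) (E := H) x, Complex.reCLM_apply]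
    norm_cast
  refine ⟨?_, ?_, ?_⟩
  · -- (1) orthonormal bases
    intro i
    constructor
    · rw [orthonormal_iff_ite]
      intro h h'
      have e1 : ⟪lam (h : G) (u i η), lam (h' : G) (u i η)⟫ = ⟪lam (h : G) η, lam (h' : G) η⟫ := by
        rw [← hcomm i h η, ← hcomm i h' η]
        have e2 : ⟪u i (lam (h : G) η), u i (lam (h' : G) η)⟫
            = ⟪ContinuousLinearMap.adjoint (u i) (u i (lam (h : G) η)), lam (h' : G) η⟫ := by
          rw [ContinuousLinearMap.adjoint_inner_left]
        rw [e2]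
        have e3 : ContinuousLinearMap.adjoint (u i) (u i (lam (h : G) η)) = p₁ (lam (h : G) η) := by
          calc ContinuousLinearMap.adjoint (u i) (u i (lam (h : G) η)) = (ContinuousLinearMap.adjoint (u i) ∘L u i) (lam (h : G) η) := rfl
            _ = p₁ (lam (h : G) η) := by rw [(huni i).1]
        rw [e3, hpM _ (hMinv _ _ hηM)]
      have := (orthonormal_iff_ite.mp hON) h h'
      simp only [inner_smul_left, inner_smul_right] at this ⊢
      rw [e1]
      exact this
    · apply le_antisymm
      · apply Submodule.topologicalClosure_minimal
        · rw [Submodule.span_le]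
          rintro x ⟨h, rfl⟩
          exact hMinv _ _ (huM i η)
        · exact hMclosed
      · intro x hx
        rw [← SetLike.mem_coe, Submodule.topologicalClosure_coe]
        have hx1 : ContinuousLinearMap.adjoint (u i) x ∈ closure
            ((Submodule.span ℂ (Set.range fun h : K => lam (h : G) η) : Submodule ℂ H) : Set H) := by
          rw [← Submodule.topologicalClosure_coe, hdense]
          exact hAM i x
        have hx2 : x = u i (ContinuousLinearMap.adjoint (u i) x) := by rw [hUA, hpM x hx]
        have himg : u i '' ((Submodule.span ℂ (Set.range fun h : K => lam (h : G) η) :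
            Submodule ℂ H) : Set H) ⊆
            ((Submodule.span ℂ (Set.range fun h : K => lam (h : G) (u i η)) :
              Submodule ℂ H) : Set H) := by
          rintro y ⟨z, hz, rfl⟩
          have : z ∈ Submodule.span ℂ (Set.range fun h : K => lam (h : G) η) := hz
          have hmap : u i z ∈ Submodule.map (u i : H →ₗ[ℂ] H)
              (Submodule.span ℂ (Set.range fun h : K => lam (h : G) η)) :=
            Submodule.mem_map_of_mem this
          rw [Submodule.map_span] at hmap
          refine Submodule.span_mono ?_ hmap
          rintro y' ⟨y'', ⟨h, rfl⟩, rfl⟩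
          exact ⟨h, (hcomm i h η).symm⟩
        have hmem1 : x ∈ u i '' closure ((Submodule.span ℂ
            (Set.range fun h : K => lam (h : G) η) : Submodule ℂ H) : Set H) :=
          ⟨ContinuousLinearMap.adjoint (u i) x, hx1, hx2.symm⟩
        have hsub1 := image_closure_subset_closure_image (f := ⇑(u i))
          (s := ((Submodule.span ℂ (Set.range fun h : K => lam (h : G) η) :
            Submodule ℂ H) : Set H)) (u i).continuous
        have hsub2 := closure_mono himg
        exact hsub2 (hsub1 hmem1)
  · -- (2) Parseval frame vectors
    intro i
    refine ⟨fun g => hMinv _ _ (huM i η), ?_⟩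
    intro f hf
    have h1 := lemProd i i f f hf hf
    rw [if_pos rfl] at h1
    have h2 := h1.mapL Complex.reCLM
    have hfun : (fun g : G => Complex.reCLM
        (⟪f, lam g (u i η)⟫ * (starRingEnd ℂ) ⟪f, lam g (u i η)⟫))
        = fun g : G => ‖⟪f, lam g (u i η)⟫‖ ^ 2 := by
      funext g
      exact hre _
    rw [hfun, hre_inner] at h2
    exact h2.tsum_eq
  · -- (3) strong disjointness
    intro f hf
    have hij : ∀ i j : Fin N, HasSum
        (fun g : G => ⟪f i, lam g (u i η)⟫ * (starRingEnd ℂ) ⟪f j, lam g (u j η)⟫)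
        (if i = j then ⟪f i, f j⟫ else 0) := fun i j => lemProd i j _ _ (hf i) (hf j)
    have h1 : ∀ i : Fin N, HasSum
        (fun g : G => ∑ j, ⟪f i, lam g (u i η)⟫ * (starRingEnd ℂ) ⟪f j, lam g (u j η)⟫)
        (∑ j, if i = j then ⟪f i, f j⟫ else 0) := fun i => hasSum_sum (fun j _ => hij i j)
    have h2 : HasSum
        (fun g : G => ∑ i, ∑ j, ⟪f i, lam g (u i η)⟫ * (starRingEnd ℂ) ⟪f j, lam g (u j η)⟫)
        (∑ i, ∑ j, if i = j then ⟪f i, f j⟫ else 0) := hasSum_sum (fun i _ => h1 i)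
    have hval : (∑ i, ∑ j, if i = j then ⟪f i, f j⟫ else 0) = ∑ i, ⟪f i, f i⟫ := by
      apply Finset.sum_congr rfl
      intro i _
      rw [Finset.sum_ite_eq Finset.univ i (fun j => ⟪f i, f j⟫)]
      simp
    rw [hval] at h2
    have h3 := h2.mapL Complex.reCLM
    have hfun : (fun g : G => Complex.reCLM
        (∑ i, ∑ j, ⟪f i, lam g (u i η)⟫ * (starRingEnd ℂ) ⟪f j, lam g (u j η)⟫))
        = fun g : G => ‖∑ i, ⟪f i, lam g (u i η)⟫‖ ^ 2 := by
      funext g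
      have e1 : (∑ i, ∑ j, ⟪f i, lam g (u i η)⟫ * (starRingEnd ℂ) ⟪f j, lam g (u j η)⟫)
          = (∑ i, ⟪f i, lam g (u i η)⟫) * (starRingEnd ℂ) (∑ j, ⟪f j, lam g (u j η)⟫) := by
        rw [map_sum, Finset.sum_mul_sum]
      rw [e1]
      exact hre _
    rw [hfun] at h3
    have hval2 : Complex.reCLM (∑ i, ⟪f i, f i⟫) = ∑ i, ‖f i‖ ^ 2 := by
      rw [map_sum]
      exact Finset.sum_congr rfl (fun i _ => hre_inner (f i))
    rw [hval2] at h3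
    exact h3.tsum_eq
end
end

section
/- Let G be a countable group, K a subgroup of G of finite index N, and π a unitary representation of G on a complex Hilbert space H. Suppose η₁ and η₂ are strongly disjoint Parseval frame vectors for H such that {√N · π(h)η₁ : h ∈ K} and {√N · π(h)η₂ : h ∈ K} are both orthonormal bases for H. Let α, β ∈ ℂ with |α|² + |β|² = 1 and |α| ≠ |β|. Then η := αη₁ + βη₂ is a Parseval frame vector for H, and the family {π(h)η : h ∈ K} is a Riesz basis for H. -/
noncomputable section

open scoped ComplexConjugate

local notation "⟪" x ", " y "⟫" => @inner ℂ _ _ x y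

variable {G : Type*} [Group G]
variable {H : Type*} [NormedAddCommGroup H] [InnerProductSpace ℂ H]

lemma norm_add_sq_c (x y : ℂ) : ‖x + y‖^2 = ‖x‖^2 + ‖y‖^2 + 2*(x * (starRingEnd ℂ) y).re := by
  have h : ∀ z : ℂ, ‖z‖^2 = z.re^2 + z.im^2 := fun z => by
    rw [Complex.sq_norm, Complex.normSq_apply]; ring
  simp only [h, Complex.add_re, Complex.add_im, Complex.mul_re, Complex.conj_re, Complex.conj_im]
  ring

lemma isUnit_one_add_of_norm_lt {R : Type*} [NormedRing R] [CompleteSpace R] (t : R)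
    (h : ‖t‖ < 1) : IsUnit (1 + t) := by
  have h' : ‖-t‖ < 1 := by rwa [norm_neg]
  have := (Units.oneSub (-t) h').isUnit
  simpa [sub_neg_eq_add] using this

lemma isUnit_smul_clm {H : Type*} [NormedAddCommGroup H] [InnerProductSpace ℂ H]
    (c : ℂ) (hc : c ≠ 0) (S : H →L[ℂ] H) (hS : IsUnit S) : IsUnit (c • S) := by
  have h1 : IsUnit (c • (1 : H →L[ℂ] H)) := by
    rw [← Algebra.algebraMap_eq_smul_one]
    exact (isUnit_iff_ne_zero.2 hc).map (algebraMap ℂ (H →L[ℂ] H))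
  have h2 : c • S = (c • (1 : H →L[ℂ] H)) * S := by rw [smul_mul_assoc, one_mul]
  rw [h2]
  exact h1.mul hS

theorem stmt17 {G : Type*} [Group G] [Countable G]
    {H : Type*} [NormedAddCommGroup H] [InnerProductSpace ℂ H] [CompleteSpace H]
    (π : G →* (H ≃ₗᵢ[ℂ] H)) (K : Subgroup G) (N : ℕ) (hN : 0 < N)
    (hidx : K.index = N) (η₁ η₂ : H)
    (h1 : IsParsevalFrameVector π η₁) (h2 : IsParsevalFrameVector π η₂)
    (hdisj : StronglyDisjointPairIn π π η₁ η₂ ⊤ ⊤)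
    (hON1 : Orthonormal ℂ (fun h : K => (Real.sqrt N : ℂ) • π (h : G) η₁))
    (hd1 : (Submodule.span ℂ (Set.range fun h : K => π (h : G) η₁)).topologicalClosure = ⊤)
    (hON2 : Orthonormal ℂ (fun h : K => (Real.sqrt N : ℂ) • π (h : G) η₂))
    (hd2 : (Submodule.span ℂ (Set.range fun h : K => π (h : G) η₂)).topologicalClosure = ⊤)
    (α β : ℂ) (hab : ‖α‖ ^ 2 + ‖β‖ ^ 2 = 1) (hne : ‖α‖ ≠ ‖β‖) :
    IsParsevalFrameVector π (α • η₁ + β • η₂) ∧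
    ∃ (e : K → H) (T : H ≃L[ℂ] H), Orthonormal ℂ e ∧
      (Submodule.span ℂ (Set.range e)).topologicalClosure = ⊤ ∧
      ∀ h : K, π (h : G) (α • η₁ + β • η₂) = T (e h) := by
  classical
  set η : H := α • η₁ + β • η₂ with hη
  have hsummable : ∀ (ξ : H), IsParsevalFrameVector π ξ → ∀ f : H,
      Summable (fun g : G => ‖⟪f, π g ξ⟫‖ ^ 2) := by
    intro ξ hξ f
    rcases eq_or_ne f 0 with rfl | hf
    · simpa using summable_zero
    · by_contra hs
      have h0 := hξ f
      rw [tsum_eq_zero_of_not_summable hs] at h0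
      have : ‖f‖ = 0 := by nlinarith [norm_nonneg f]
      exact hf (norm_eq_zero.mp this)
  have hsa := hsummable η₁ h1
  have hsb := hsummable η₂ h2
  have hsab : ∀ f : H, Summable (fun g : G =>
      ⟪f, π g η₁⟫ * (starRingEnd ℂ) ⟪f, π g η₂⟫) := by
    intro f
    apply Summable.of_norm
    apply Summable.of_nonneg_of_le (fun g => norm_nonneg _) (fun g => ?_) ((hsa f).add (hsb f))
    rw [norm_mul, RCLike.norm_conj]
    nlinarith [sq_nonneg (‖⟪f, π g η₁⟫‖ - ‖⟪f, π g η₂⟫‖),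
      norm_nonneg (⟪f, π g η₁⟫), norm_nonneg (⟪f, π g η₂⟫)]
  have hinner : ∀ (f : H) (g : G), ⟪f, π g η⟫ = α * ⟪f, π g η₁⟫ + β * ⟪f, π g η₂⟫ := by
    intro f g
    rw [hη, map_add, LinearIsometryEquiv.map_smul, LinearIsometryEquiv.map_smul,
      inner_add_right, inner_smul_right, inner_smul_right]
  have key1 : IsParsevalFrameVector π η := by
    intro f
    have hA : Summable (fun g : G => ‖α‖^2 * ‖⟪f, π g η₁⟫‖^2) := (hsa f).mul_left _
    have hB : Summable (fun g : G => ‖β‖^2 * ‖⟪f, π g η₂⟫‖^2) := (hsb f).mul_left _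
    have hCc : Summable (fun g : G => (α * (starRingEnd ℂ) β)
        * (⟪f, π g η₁⟫ * (starRingEnd ℂ) ⟪f, π g η₂⟫)) := (hsab f).mul_left _
    have hC : Summable (fun g : G => 2 * ((α * (starRingEnd ℂ) β)
        * (⟪f, π g η₁⟫ * (starRingEnd ℂ) ⟪f, π g η₂⟫)).re) :=
      (hCc.map Complex.reAddGroupHom Complex.continuous_re).mul_left 2
    have hterm : ∀ g : G, ‖⟪f, π g η⟫‖^2
        = ‖α‖^2 * ‖⟪f, π g η₁⟫‖^2 + ‖β‖^2 * ‖⟪f, π g η₂⟫‖^2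
          + 2 * ((α * (starRingEnd ℂ) β)
            * (⟪f, π g η₁⟫ * (starRingEnd ℂ) ⟪f, π g η₂⟫)).re := by
      intro g
      have : α * ⟪f, π g η₁⟫ * (starRingEnd ℂ) (β * ⟪f, π g η₂⟫)
          = (α * (starRingEnd ℂ) β) * (⟪f, π g η₁⟫ * (starRingEnd ℂ) ⟪f, π g η₂⟫) := by
        rw [map_mul]; ring
      rw [hinner f g, norm_add_sq_c, norm_mul, norm_mul, this, mul_pow, mul_pow]
    calc (∑' g : G, ‖⟪f, π g η⟫‖^2)
        = ∑' g : G, (‖α‖^2 * ‖⟪f, π g η₁⟫‖^2 + ‖β‖^2 * ‖⟪f, π g η₂⟫‖^2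
            + 2 * ((α * (starRingEnd ℂ) β)
              * (⟪f, π g η₁⟫ * (starRingEnd ℂ) ⟪f, π g η₂⟫)).re) := tsum_congr hterm
      _ = (∑' g : G, (‖α‖^2 * ‖⟪f, π g η₁⟫‖^2 + ‖β‖^2 * ‖⟪f, π g η₂⟫‖^2))
          + ∑' g : G, 2 * ((α * (starRingEnd ℂ) β)
              * (⟪f, π g η₁⟫ * (starRingEnd ℂ) ⟪f, π g η₂⟫)).re := Summable.tsum_add (hA.add hB) hC
      _ = ‖f‖^2 := by
          have e1 : (∑' g : G, (‖α‖^2 * ‖⟪f, π g η₁⟫‖^2 + ‖β‖^2 * ‖⟪f, π g η₂⟫‖^2))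
              = ‖α‖^2 * ‖f‖^2 + ‖β‖^2 * ‖f‖^2 := by
            rw [Summable.tsum_add hA hB, tsum_mul_left, tsum_mul_left, h1 f, h2 f]
          have e2 : (∑' g : G, 2 * ((α * (starRingEnd ℂ) β)
              * (⟪f, π g η₁⟫ * (starRingEnd ℂ) ⟪f, π g η₂⟫)).re) = 0 := by
            rw [tsum_mul_left]
            have hre : (∑' g : G, ((α * (starRingEnd ℂ) β)
                * (⟪f, π g η₁⟫ * (starRingEnd ℂ) ⟪f, π g η₂⟫))).re
                = ∑' g : G, ((α * (starRingEnd ℂ) β)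
                * (⟪f, π g η₁⟫ * (starRingEnd ℂ) ⟪f, π g η₂⟫)).re := by
              have := ContinuousLinearMap.map_tsum Complex.reCLM hCc
              simpa using this
            rw [← hre, tsum_mul_left, hdisj f trivial f trivial, mul_zero]
            simp
          rw [e1, e2]
          linear_combination ‖f‖^2 * hab
  refine ⟨key1, ?_⟩
  -- Part 2
  set s : ℂ := ((Real.sqrt N : ℝ) : ℂ) with hs
  have hsR : (0:ℝ) < Real.sqrt N := Real.sqrt_pos.2 (by exact_mod_cast hN)
  have hs0 : s ≠ 0 := by
    simp only [hs, ne_eq, Complex.ofReal_eq_zero]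
    exact ne_of_gt hsR
  have hspan_eq : ∀ w : K → H,
      Submodule.span ℂ (Set.range fun h : K => s • w h) = Submodule.span ℂ (Set.range w) := by
    intro w
    apply le_antisymm
    · rw [Submodule.span_le]
      rintro _ ⟨h, rfl⟩
      exact Submodule.smul_mem _ _ (Submodule.subset_span ⟨h, rfl⟩)
    · rw [Submodule.span_le]
      rintro _ ⟨h, rfl⟩
      have : w h = s⁻¹ • (s • w h) := by rw [smul_smul, inv_mul_cancel₀ hs0, one_smul]
      rw [this]
      exact Submodule.smul_mem _ _ (Submodule.subset_span ⟨h, rfl⟩)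
  have hsp1 : ⊤ ≤ (Submodule.span ℂ
      (Set.range fun h : K => (Real.sqrt N : ℂ) • π (h : G) η₁)).topologicalClosure := by
    rw [show (Set.range fun h : K => (Real.sqrt N : ℂ) • π (h : G) η₁)
        = (Set.range fun h : K => s • π (h : G) η₁) from rfl,
      hspan_eq (fun h : K => π (h : G) η₁), hd1]
  have hsp2 : ⊤ ≤ (Submodule.span ℂ
      (Set.range fun h : K => (Real.sqrt N : ℂ) • π (h : G) η₂)).topologicalClosure := by
    rw [show (Set.range fun h : K => (Real.sqrt N : ℂ) • π (h : G) η₂)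
        = (Set.range fun h : K => s • π (h : G) η₂) from rfl,
      hspan_eq (fun h : K => π (h : G) η₂), hd2]
  let b₁ : HilbertBasis K ℂ H := HilbertBasis.mk hON1 hsp1
  let b₂ : HilbertBasis K ℂ H := HilbertBasis.mk hON2 hsp2
  have hb₁ : ∀ h : K, b₁ h = s • π (h : G) η₁ := fun h => by
    rw [show ⇑b₁ = fun h : K => (Real.sqrt N : ℂ) • π (h : G) η₁ from HilbertBasis.coe_mk _ _]
  have hb₂ : ∀ h : K, b₂ h = s • π (h : G) η₂ := fun h => by
    rw [show ⇑b₂ = fun h : K => (Real.sqrt N : ℂ) • π (h : G) η₂ from HilbertBasis.coe_mk _ _]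
  let U : H ≃ₗᵢ[ℂ] H := b₁.repr.trans b₂.repr.symm
  have hU : ∀ h : K, U (b₁ h) = b₂ h := by
    intro h
    show b₂.repr.symm (b₁.repr (b₁ h)) = b₂ h
    rw [b₁.repr_self, ← b₂.repr_self, LinearIsometryEquiv.symm_apply_apply]
  let Uc : H →L[ℂ] H := U.toLinearIsometry.toContinuousLinearMap
  let Vc : H →L[ℂ] H := U.symm.toLinearIsometry.toContinuousLinearMap
  have hUVapp : ∀ x : H, Uc (Vc x) = x := fun x => U.apply_symm_apply x
  have hVUapp : ∀ x : H, Vc (Uc x) = x := fun x => U.symm_apply_apply x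
  have hUV : Uc * Vc = 1 := by ext x; exact hUVapp x
  have hVU : Vc * Uc = 1 := by ext x; exact hVUapp x
  have hUcUnit : IsUnit Uc := ⟨⟨Uc, Vc, hUV, hVU⟩, rfl⟩
  have hUnorm : ‖Uc‖ ≤ 1 := U.toLinearIsometry.norm_toContinuousLinearMap_le
  have hVnorm : ‖Vc‖ ≤ 1 := U.symm.toLinearIsometry.norm_toContinuousLinearMap_le
  set S : H →L[ℂ] H := α • (1 : H →L[ℂ] H) + β • Uc with hSdef
  have hSapp : ∀ x : H, S x = α • x + β • Uc x := fun x => by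
    simp [hSdef]
  have hSunit : IsUnit S := by
    rcases hne.lt_or_gt with hlt | hlt
    · -- ‖α‖ < ‖β‖
      have hβ : β ≠ 0 := by
        intro h0; rw [h0] at hlt; simp at hlt; exact absurd hlt (norm_nonneg _).not_gt
      have hnormlt : ‖(β⁻¹ * α) • Vc‖ < 1 := by
        have h1' : ‖(β⁻¹ * α) • Vc‖ ≤ ‖β⁻¹ * α‖ * ‖Vc‖ := norm_smul_le _ _
        have h2' : ‖β⁻¹ * α‖ = ‖β‖⁻¹ * ‖α‖ := by rw [norm_mul, norm_inv]
        have hβpos : (0:ℝ) < ‖β‖ := lt_of_le_of_lt (norm_nonneg α) hlt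
        have h3' : ‖β‖⁻¹ * ‖α‖ < 1 := by
          rw [inv_mul_lt_iff₀ hβpos, mul_one]; exact hlt
        calc ‖(β⁻¹ * α) • Vc‖ ≤ ‖β⁻¹ * α‖ * ‖Vc‖ := h1'
          _ ≤ ‖β⁻¹ * α‖ * 1 := by
              apply mul_le_mul_of_nonneg_left hVnorm (norm_nonneg _)
          _ = ‖β‖⁻¹ * ‖α‖ := by rw [mul_one, h2']
          _ < 1 := h3'
      have hfac : S = β • (Uc * (1 + (β⁻¹ * α) • Vc)) := by
        ext x
        simp only [hSapp, ContinuousLinearMap.smul_apply, ContinuousLinearMap.mul_apply,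
          ContinuousLinearMap.add_apply, ContinuousLinearMap.one_apply, map_add, map_smul,
          hUVapp]
        rw [smul_add, smul_smul, mul_inv_cancel_left₀ hβ]
        abel
      rw [hfac]
      exact isUnit_smul_clm β hβ _ (hUcUnit.mul (isUnit_one_add_of_norm_lt _ hnormlt))
    · -- ‖β‖ < ‖α‖
      have hα : α ≠ 0 := by
        intro h0; rw [h0] at hlt; simp at hlt; exact absurd hlt (norm_nonneg _).not_gt
      have hnormlt : ‖(α⁻¹ * β) • Uc‖ < 1 := by
        have h1' : ‖(α⁻¹ * β) • Uc‖ ≤ ‖α⁻¹ * β‖ * ‖Uc‖ := norm_smul_le _ _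
        have h2' : ‖α⁻¹ * β‖ = ‖α‖⁻¹ * ‖β‖ := by rw [norm_mul, norm_inv]
        have hαpos : (0:ℝ) < ‖α‖ := lt_of_le_of_lt (norm_nonneg β) hlt
        have h3' : ‖α‖⁻¹ * ‖β‖ < 1 := by
          rw [inv_mul_lt_iff₀ hαpos, mul_one]; exact hlt
        calc ‖(α⁻¹ * β) • Uc‖ ≤ ‖α⁻¹ * β‖ * ‖Uc‖ := h1'
          _ ≤ ‖α⁻¹ * β‖ * 1 := by
              apply mul_le_mul_of_nonneg_left hUnorm (norm_nonneg _)
          _ = ‖α‖⁻¹ * ‖β‖ := by rw [mul_one, h2']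
          _ < 1 := h3'
      have hfac : S = α • (1 + (α⁻¹ * β) • Uc) := by
        ext x
        simp only [hSapp, ContinuousLinearMap.smul_apply, ContinuousLinearMap.add_apply,
          ContinuousLinearMap.one_apply]
        rw [smul_add, smul_smul, mul_inv_cancel_left₀ hα]
      rw [hfac]
      exact isUnit_smul_clm α hα _ (isUnit_one_add_of_norm_lt _ hnormlt)
  have hTunit : IsUnit (s⁻¹ • S) := isUnit_smul_clm s⁻¹ (inv_ne_zero hs0) S hSunit
  let T : H ≃L[ℂ] H := ContinuousLinearEquiv.unitsEquiv ℂ H hTunit.unit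
  refine ⟨fun h : K => (Real.sqrt N : ℂ) • π (h : G) η₁, T, hON1, ?_, ?_⟩
  · exact top_le_iff.mp hsp1
  · intro h
    have hTapp : T ((Real.sqrt N : ℂ) • π (h : G) η₁) = (s⁻¹ • S) (s • π (h : G) η₁) := by
      show (hTunit.unit : H →L[ℂ] H) _ = _
      rw [IsUnit.unit_spec]
    have hUe : Uc (s • π (h : G) η₁) = s • π (h : G) η₂ := by
      show U (s • π (h : G) η₁) = s • π (h : G) η₂
      rw [← hb₁ h, ← hb₂ h]; exact hU h
    rw [hTapp]
    simp only [ContinuousLinearMap.smul_apply, hSapp, hUe]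
    rw [map_add, LinearIsometryEquiv.map_smul, LinearIsometryEquiv.map_smul]
    simp only [smul_add, smul_smul]
    rw [show s⁻¹ * (α * s) = α by rw [mul_comm α s, ← mul_assoc, inv_mul_cancel₀ hs0, one_mul],
      show s⁻¹ * (β * s) = β by rw [mul_comm β s, ← mul_assoc, inv_mul_cancel₀ hs0, one_mul]]
end
end

section
/- Let G be a countable group, K a subgroup of G, and π a unitary representation of G on a complex Hilbert space H. Let η be a Parseval frame vector for H, let q' be an orthogonal projection on H commuting with π(g) for all g ∈ G, and set η₁ := q'η. If {π(h)η₁ : h ∈ K} is a Riesz sequence, then {π(h)η : h ∈ K} is a Riesz sequence. -/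
noncomputable section

open scoped ComplexConjugate

local notation "⟪" x ", " y "⟫" => @inner ℂ _ _ x y

variable {G : Type*} [Group G]
variable {H : Type*} [NormedAddCommGroup H] [InnerProductSpace ℂ H]

theorem stmt18 {G : Type*} [Group G] [Countable G]
    {H : Type*} [NormedAddCommGroup H] [InnerProductSpace ℂ H] [CompleteSpace H]
    (π : G →* (H ≃ₗᵢ[ℂ] H)) (K : Subgroup G) (η : H)
    (hη : IsParsevalFrameVector π η)
    (q : H →L[ℂ] H) (hq1 : IsSelfAdjoint q) (hq2 : q ∘L q = q)
    (hqc : InCommutant π q)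
    (hR : IsRieszSequence (fun h : K => π (h : G) (q η))) :
    IsRieszSequence (fun h : K => π (h : G) η) := by
  classical
  obtain ⟨A, B, hA, hB, hAB⟩ := hR
  refine ⟨A, 1, hA, one_pos, fun c => ?_⟩
  set s := c.support with hs
  set f : H := ∑ j ∈ s, c j • π (j : G) η with hf
  -- q is a contraction
  have hqq : ∀ x : H, q (q x) = q x := by
    intro x
    have := congrArg (fun T : H →L[ℂ] H => T x) hq2
    simpa using this
  have hqnorm : ∀ x : H, ‖q x‖ ≤ ‖x‖ := by
    intro x
    have h2 : (⟪q x, q x⟫ : ℂ) = ⟪x, q x⟫ := by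
      have := hq1.isSymmetric x (q x)
      simpa [hqq x] using this
    have h3 : ‖q x‖ ^ 2 ≤ ‖x‖ * ‖q x‖ := by
      calc ‖q x‖ ^ 2 = ‖(⟪q x, q x⟫ : ℂ)‖ := by
            rw [inner_self_eq_norm_sq_to_K]
            simp [Complex.norm_real]
        _ = ‖(⟪x, q x⟫ : ℂ)‖ := by rw [h2]
        _ ≤ ‖x‖ * ‖q x‖ := norm_inner_le_norm x (q x)
    rcases eq_or_lt_of_le (norm_nonneg (q x)) with h0 | h0
    · rw [← h0]; exact norm_nonneg x
    · nlinarith [h3, h0]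
  -- lower bound
  have hqf : q f = ∑ j ∈ s, c j • π (j : G) (q η) := by
    rw [hf, map_sum]
    refine Finset.sum_congr rfl fun j _ => ?_
    rw [map_smul, hqc]
  constructor
  · have hlow := (hAB c).1
    calc A * ∑ j ∈ s, ‖c j‖ ^ 2 ≤ ‖∑ j ∈ s, c j • π (j : G) (q η)‖ ^ 2 := hlow
      _ = ‖q f‖ ^ 2 := by rw [hqf]
      _ ≤ ‖f‖ ^ 2 := by
          have := hqnorm f
          nlinarith [norm_nonneg (q f), norm_nonneg f]
  -- upper bound
  · have key : ∀ t : Finset G, ∑ g ∈ t, ‖(⟪f, π g η⟫ : ℂ)‖ ^ 2 ≤ ‖f‖ ^ 2 := by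
      intro t
      by_cases hsum : Summable (fun g : G => ‖(⟪f, π g η⟫ : ℂ)‖ ^ 2)
      · calc ∑ g ∈ t, ‖(⟪f, π g η⟫ : ℂ)‖ ^ 2
            ≤ ∑' g : G, ‖(⟪f, π g η⟫ : ℂ)‖ ^ 2 :=
              Summable.sum_le_tsum t (fun g _ => by positivity) hsum
          _ = ‖f‖ ^ 2 := hη f
      · have h0 : ‖f‖ ^ 2 = 0 := by
          rw [← hη f, tsum_eq_zero_of_not_summable hsum]
        have hf0 : f = 0 := by
          have : ‖f‖ = 0 := by nlinarith [norm_nonneg f]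
          exact norm_eq_zero.mp this
        simp [hf0]
    have h5 : ∑ j ∈ s, ‖(⟪f, π (j : G) η⟫ : ℂ)‖ ^ 2 ≤ ‖f‖ ^ 2 := by
      calc ∑ j ∈ s, ‖(⟪f, π (j : G) η⟫ : ℂ)‖ ^ 2
          = ∑ g ∈ s.image (fun j : K => (j : G)), ‖(⟪f, π g η⟫ : ℂ)‖ ^ 2 := by
            rw [Finset.sum_image (g := fun j : K => (j : G))
              (f := fun g : G => ‖(⟪f, π g η⟫ : ℂ)‖ ^ 2)
              (fun a _ b _ h => Subtype.coe_injective h)]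
        _ ≤ ‖f‖ ^ 2 := key _
    have hinner : (⟪f, f⟫ : ℂ) = ∑ j ∈ s, c j * ⟪f, π (j : G) η⟫ := by
      nth_rewrite 2 [hf]
      rw [inner_sum]
      exact Finset.sum_congr rfl fun j _ => inner_smul_right _ _ _
    have h6 : (‖f‖ ^ 2) ^ 2 ≤ (∑ j ∈ s, ‖c j‖ ^ 2) * ‖f‖ ^ 2 := by
      calc (‖f‖ ^ 2) ^ 2 = ‖(⟪f, f⟫ : ℂ)‖ ^ 2 := by
            rw [inner_self_eq_norm_sq_to_K]
            simp [Complex.norm_real]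
        _ = ‖∑ j ∈ s, c j * ⟪f, π (j : G) η⟫‖ ^ 2 := by rw [hinner]
        _ ≤ (∑ j ∈ s, ‖c j‖ * ‖(⟪f, π (j : G) η⟫ : ℂ)‖) ^ 2 := by
            have h7 : ‖∑ j ∈ s, c j * ⟪f, π (j : G) η⟫‖
                ≤ ∑ j ∈ s, ‖c j‖ * ‖(⟪f, π (j : G) η⟫ : ℂ)‖ := by
              refine (norm_sum_le _ _).trans_eq ?_
              exact Finset.sum_congr rfl fun j _ => norm_mul _ _
            have h8 : (0 : ℝ) ≤ ‖∑ j ∈ s, c j * ⟪f, π (j : G) η⟫‖ := norm_nonneg _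
            nlinarith [h7, h8]
        _ ≤ (∑ j ∈ s, ‖c j‖ ^ 2) * ∑ j ∈ s, ‖(⟪f, π (j : G) η⟫ : ℂ)‖ ^ 2 :=
            Finset.sum_mul_sq_le_sq_mul_sq s _ _
        _ ≤ (∑ j ∈ s, ‖c j‖ ^ 2) * ‖f‖ ^ 2 := by
            refine mul_le_mul_of_nonneg_left h5 ?_
            positivity
    have hsum0 : (0 : ℝ) ≤ ∑ j ∈ s, ‖c j‖ ^ 2 := by positivity
    rcases eq_or_lt_of_le (by positivity : (0 : ℝ) ≤ ‖f‖ ^ 2) with h0 | h0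
    · rw [← h0]; nlinarith [hsum0]
    · have : ‖f‖ ^ 2 ≤ ∑ j ∈ s, ‖c j‖ ^ 2 := by nlinarith [h6, h0]
      linarith [this]
end
end
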